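/- Consider a forgetful PIN model, i.e. a PIN model with parameters (𝒜, ρ, P, φ) in which φ_{ij}(ℓ) = R_{ℓj} for all i, j, ℓ ∈ 𝒜 for some row-stochastic matrix R, on a sequence of interaction graphs G_n (G_n having n nodes and at least one link) with total mixing gaps W_{G_n} → 0 as n → ∞. Assume that the row-stochastic matrix S = (1−ρ)P + ρR is irreducible, and let π ∈ P(𝒜) be its unique invariant probability vector (Sᵀπ = π). For each n ≥ 2 let μ_n be a stationary distribution of the PIN model on G_n. Then for every δ > 0, lim_{n→∞} μ_n({x : ‖θ(x) − π‖₂ < δ}) = 1. -/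

import Mathlib

open Finset Filter

noncomputable section

/-- The empirical type (state frequencies) of a configuration. -/
def confType {V A : Type*} [Fintype V] [DecidableEq A] (x : V → A) (i : A) : ℝ :=
  ((Finset.univ.filter fun v => x v = i).card : ℝ) / (Fintype.card V : ℝ)

/-- The boundary (empirical link-pair frequencies) of a configuration. -/
def boundary {V A : Type*} [DecidableEq A] (E : Finset (V × V)) (x : V → A) (i j : A) : ℝ :=
  ((E.filter fun e => x e.1 = i ∧ x e.2 = j).card : ℝ) / (E.card : ℝ)

/-- Off-diagonal part of the PIN transition matrix. -/
def Toff {V A : Type*} [Fintype V] [DecidableEq V] [DecidableEq A]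
    (E : Finset (V × V)) (ρ : ℝ) (P : A → A → ℝ) (φ : A → A → A → ℝ) (x y : V → A) : ℝ :=
  if (Finset.univ.filter fun v => x v ≠ y v).card = 1 then
    ∑ u ∈ Finset.univ.filter fun v => x v ≠ y v,
      ((1 - ρ) * (1 / (Fintype.card V : ℝ)) * P (x u) (y u)
        + (ρ / (E.card : ℝ)) * ∑ e ∈ E.filter fun e => e.1 = u, φ (x u) (y u) (x e.2))
  else 0

/-- The PIN transition matrix. -/
def pinTrans {V A : Type*} [Fintype V] [DecidableEq V] [Fintype A] [DecidableEq A]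
    (E : Finset (V × V)) (ρ : ℝ) (P : A → A → ℝ) (φ : A → A → A → ℝ) (x y : V → A) : ℝ :=
  if x = y then 1 - ∑ z : V → A, Toff E ρ P φ x z else Toff E ρ P φ x y

/-- The mean drift of the PIN model. -/
def meanDrift {V A : Type*} [Fintype V] [DecidableEq V] [Fintype A] [DecidableEq A]
    (E : Finset (V × V)) (ρ : ℝ) (P : A → A → ℝ) (φ : A → A → A → ℝ) (x : V → A) (i : A) : ℝ :=
  (Fintype.card V : ℝ) * ∑ y : V → A, pinTrans E ρ P φ x y * (confType y i - confType x i)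

/-- The limit drift of the PIN model. -/
def limitDrift {A : Type*} [Fintype A] (ρ : ℝ) (P : A → A → ℝ) (φ : A → A → A → ℝ)
    (θ : A → ℝ) (i : A) : ℝ :=
  ((1 - ρ) * ∑ j, P j i * θ j) + (ρ * ∑ ℓ, θ ℓ * ∑ j, φ j i ℓ * θ j) - θ i

/-- The linear operator Q acting on boundaries. -/
def Qop {A : Type*} [Fintype A] (φ : A → A → A → ℝ) (ξ : A → A → ℝ) (i : A) : ℝ :=
  (∑ ℓ, ∑ j, ξ j ℓ * φ j i ℓ) - ∑ ℓ, ξ i ℓ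

/-- Membership in the probability simplex over `A`. -/
def inSimplex {A : Type*} [Fintype A] (θ : A → ℝ) : Prop :=
  (∀ i, 0 ≤ θ i) ∧ ∑ i, θ i = 1

/-- The hypotheses on the parameters of a PIN model: `ρ ∈ [0,1]`, `P` and each `φ(ℓ)`
row-stochastic and nonnegative, the interaction graph nonempty and without self-loops. -/
def IsPinModel {V A : Type*} [Fintype A] (E : Finset (V × V)) (ρ : ℝ)
    (P : A → A → ℝ) (φ : A → A → A → ℝ) : Prop :=
  0 ≤ ρ ∧ ρ ≤ 1 ∧ (∀ i j, 0 ≤ P i j) ∧ (∀ i, ∑ j, P i j = 1) ∧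
    (∀ i j ℓ, 0 ≤ φ i j ℓ) ∧ (∀ i ℓ, ∑ j, φ i j ℓ = 1) ∧
    E.Nonempty ∧ ∀ e ∈ E, e.1 ≠ e.2

/-- Stationary distribution of a PIN model. -/
def IsStationaryPin {V A : Type*} [Fintype V] [DecidableEq V] [Fintype A] [DecidableEq A]
    (E : Finset (V × V)) (ρ : ℝ) (P : A → A → ℝ) (φ : A → A → A → ℝ)
    (μ : (V → A) → ℝ) : Prop :=
  (∀ x, 0 ≤ μ x) ∧ (∑ x : V → A, μ x = 1) ∧
    ∀ y : V → A, ∑ x : V → A, μ x * pinTrans E ρ P φ x y = μ y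

/-- The total mixing gap of a graph. -/
def mixingGap {V : Type*} [Fintype V] [DecidableEq V] (E : Finset (V × V)) : ℝ :=
  sSup {w : ℝ | ∃ S U : Finset V, Disjoint S U ∧
    w = |((E.filter fun e => e.1 ∈ S ∧ e.2 ∈ U).card : ℝ) / (E.card : ℝ) -
      ((S.card : ℝ) * (U.card : ℝ)) / ((Fintype.card V : ℝ) * ((Fintype.card V : ℝ) - 1))|}

open Classical in
/-- Total `μ`-mass of the set of configurations satisfying `p`. -/
def massOf {X : Type*} [Fintype X] (μ : X → ℝ) (p : X → Prop) : ℝ :=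
  ∑ x, if p x then μ x else 0

namespace PinAux

open Finset Matrix

set_option linter.unusedSectionVars false

variable {A : Type*} [Fintype A] [DecidableEq A] [Nonempty A]

lemma pow_stoch (B : Matrix A A ℝ) (hnn : ∀ i j, 0 ≤ B i j) (hrow : ∀ i, ∑ j, B i j = 1) :
    ∀ k, (∀ i j, 0 ≤ (B ^ k) i j) ∧ (∀ i, ∑ j, (B ^ k) i j = 1) := by
  intro k
  induction k with
  | zero =>
    constructor
    · intro i j; simp [Matrix.one_apply]; split <;> norm_num
    · intro i; simp [Matrix.one_apply]
  | succ k ih =>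
    constructor
    · intro i j
      rw [pow_succ, Matrix.mul_apply]
      exact Finset.sum_nonneg fun l _ => mul_nonneg (ih.1 i l) (hnn l j)
    · intro i
      simp only [pow_succ, Matrix.mul_apply]
      rw [Finset.sum_comm]
      simp_rw [← Finset.mul_sum, hrow]
      simpa using ih.2 i

lemma entry_le_one (B : Matrix A A ℝ) (hnn : ∀ i j, 0 ≤ B i j) (hrow : ∀ i, ∑ j, B i j = 1)
    (i j : A) : B i j ≤ 1 := by
  rw [← hrow i]
  exact Finset.single_le_sum (fun l _ => hnn i l) (Finset.mem_univ j)

lemma dobrushin (B : Matrix A A ℝ) (ε : ℝ) (hε : ∀ i j, ε ≤ B i j)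
    (hrow : ∀ i, ∑ j, B i j = 1) (v : A → ℝ) (hv : ∑ i, v i = 0) :
    ∑ j, |∑ i, v i * B i j| ≤ (1 - (Fintype.card A : ℝ) * ε) * ∑ i, |v i| := by
  have h1 : ∀ j, |∑ i, v i * B i j| ≤ ∑ i, |v i| * (B i j - ε) := by
    intro j
    have heq : ∑ i, v i * B i j = ∑ i, v i * (B i j - ε) := by
      simp only [mul_sub, Finset.sum_sub_distrib, ← Finset.sum_mul, hv, zero_mul, sub_zero]
    rw [heq]
    refine (Finset.abs_sum_le_sum_abs _ _).trans (le_of_eq ?_)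
    refine Finset.sum_congr rfl fun i _ => ?_
    rw [abs_mul, abs_of_nonneg (show (0:ℝ) ≤ B i j - ε by linarith [hε i j])]
  calc ∑ j, |∑ i, v i * B i j| ≤ ∑ j, ∑ i, |v i| * (B i j - ε) :=
        Finset.sum_le_sum fun j _ => h1 j
    _ = ∑ i, |v i| * (1 - (Fintype.card A : ℝ) * ε) := by
        rw [Finset.sum_comm]
        refine Finset.sum_congr rfl fun i _ => ?_
        rw [← Finset.mul_sum, Finset.sum_sub_distrib, hrow i, Finset.sum_const, Finset.card_univ,
          nsmul_eq_mul]
    _ = _ := by rw [← Finset.sum_mul]; ring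

lemma vecMul_sum_eq (B : Matrix A A ℝ) (hrow : ∀ i, ∑ j, B i j = 1) (v : A → ℝ) :
    ∑ j, (v ᵥ* B) j = ∑ i, v i := by
  simp only [Matrix.vecMul, dotProduct]
  rw [Finset.sum_comm]
  simp_rw [← Finset.mul_sum]
  refine Finset.sum_congr rfl fun i _ => ?_
  rw [hrow i, mul_one]

lemma aux_dot (X : Matrix A A ℝ) (a u : A → ℝ) : (X *ᵥ a) ⬝ᵥ u = a ⬝ᵥ (u ᵥ* X) := by
  simp only [Matrix.mulVec, Matrix.vecMul, dotProduct, Finset.sum_mul, Finset.mul_sum]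
  rw [Finset.sum_comm]
  exact Finset.sum_congr rfl fun i _ => Finset.sum_congr rfl fun j _ => by ring

lemma exists_lyap (S : Matrix A A ℝ) (hnn : ∀ i j, 0 ≤ S i j) (hrow : ∀ i, ∑ j, S i j = 1)
    (hirr : ∀ i j, ∃ k : ℕ, 1 ≤ k ∧ 0 < (S ^ k) i j) :
    ∃ (M : Matrix A A ℝ) (CM : ℝ), 0 < CM ∧ (∀ i j, 0 ≤ M i j ∧ M i j ≤ CM) ∧
      ∀ v : A → ℝ, ∑ i, v i = 0 →
        ∑ i, (∑ j, (M i j + M j i) * v j) * ((∑ j, S j i * v j) - v i) ≤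
          - (3/2) * ∑ i, v i ^ 2 := by
  classical
  have hN1 : (1:ℝ) ≤ (Fintype.card A : ℝ) := by
    exact_mod_cast Nat.one_le_iff_ne_zero.mpr (Fintype.card_ne_zero)
  set Nr : ℝ := (Fintype.card A : ℝ) with hNr
  -- the lazy matrix D = (1 + S)/2
  set D : Matrix A A ℝ := (2⁻¹ : ℝ) • (1 + S) with hDdef
  have hone_nn : ∀ i j : A, (0:ℝ) ≤ (1 : Matrix A A ℝ) i j := by
    intro i j; rw [Matrix.one_apply]; split <;> norm_num
  have hone_row : ∀ i : A, ∑ j, (1 : Matrix A A ℝ) i j = 1 := by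
    intro i; simp [Matrix.one_apply]
  have hDnn : ∀ i j, 0 ≤ D i j := by
    intro i j
    simp only [hDdef, Matrix.smul_apply, Matrix.add_apply, smul_eq_mul]
    have := hone_nn i j; have := hnn i j; nlinarith
  have hDrow : ∀ i, ∑ j, D i j = 1 := by
    intro i
    simp only [hDdef, Matrix.smul_apply, Matrix.add_apply, smul_eq_mul]
    rw [← Finset.mul_sum, Finset.sum_add_distrib, hrow i, hone_row i]
    norm_num
  have hSpow := pow_stoch S hnn hrow
  have hDpow := pow_stoch D hDnn hDrow
  -- a positive power of D
  set K₀ : ℕ := Finset.univ.sup (fun p : A × A => (hirr p.1 p.2).choose) with hK₀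
  have hpos : ∀ i j, 0 < (D ^ K₀) i j := by
    intro i j
    obtain ⟨hk1, hkpos⟩ := (hirr i j).choose_spec
    set k := (hirr i j).choose with hk
    have hkK : k ≤ K₀ := by
      rw [hK₀]; exact Finset.le_sup (f := fun p : A × A => (hirr p.1 p.2).choose)
        (Finset.mem_univ (i, j))
    have hDK : D ^ K₀ = ((2:ℝ)⁻¹) ^ K₀ • (1 + S) ^ K₀ := by
      rw [hDdef, smul_pow]
    have hexp : ((1 + S) ^ K₀) i j
        = ∑ p ∈ Finset.HasAntidiagonal.antidiagonal K₀, (K₀.choose p.1) • (((1:Matrix A A ℝ) ^ p.1 * S ^ p.2) i j) := by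
      rw [(Commute.one_left S).add_pow' K₀]
      rw [Matrix.sum_apply]
      exact Finset.sum_congr rfl fun p _ => by rw [Matrix.smul_apply]
    have hterm_nn : ∀ p ∈ Finset.HasAntidiagonal.antidiagonal K₀,
        (0:ℝ) ≤ (K₀.choose p.1) • (((1:Matrix A A ℝ) ^ p.1 * S ^ p.2) i j) := by
      intro p _
      rw [one_pow, one_mul]
      exact nsmul_nonneg ((hSpow p.2).1 i j) _
    have hmem : (K₀ - k, k) ∈ Finset.HasAntidiagonal.antidiagonal K₀ := by
      rw [Finset.HasAntidiagonal.mem_antidiagonal]; omega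
    have hsingle : (K₀.choose (K₀ - k)) • (((1:Matrix A A ℝ) ^ (K₀ - k) * S ^ k) i j)
        ≤ ((1 + S) ^ K₀) i j := by
      rw [hexp]
      exact Finset.single_le_sum hterm_nn hmem
    have hchoose : 0 < K₀.choose (K₀ - k) := Nat.choose_pos (by omega)
    have h1 : (0:ℝ) < (K₀.choose (K₀ - k)) • (((1:Matrix A A ℝ) ^ (K₀ - k) * S ^ k) i j) := by
      rw [one_pow, one_mul]
      have : (0:ℝ) < (S ^ k) i j := hkpos
      positivity
    have h2 : (0:ℝ) < ((1 + S) ^ K₀) i j := lt_of_lt_of_le h1 hsingle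
    rw [hDK, Matrix.smul_apply, smul_eq_mul]
    positivity
  -- minimum entry and Dobrushin coefficient
  set B : Matrix A A ℝ := D ^ K₀ with hBdef
  have hBnn : ∀ i j, 0 ≤ B i j := (hDpow K₀).1
  have hBrow : ∀ i, ∑ j, B i j = 1 := (hDpow K₀).2
  set εm : ℝ := Finset.univ.inf' Finset.univ_nonempty (fun p : A × A => B p.1 p.2) with hεm
  have hεm_le : ∀ i j, εm ≤ B i j := fun i j =>
    Finset.inf'_le _ (Finset.mem_univ (i, j))
  have hεm_pos : 0 < εm := by
    obtain ⟨p, _, hp⟩ := Finset.exists_mem_eq_inf' (Finset.univ_nonempty)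
      (fun p : A × A => B p.1 p.2)
    rw [hεm, hp]; exact hpos p.1 p.2
  set γ : ℝ := 1 - Nr * εm with hγ
  have hγ1 : γ < 1 := by
    have : 0 < Nr * εm := by positivity
    rw [hγ]; linarith
  have hγ0 : 0 ≤ γ := by
    have i0 : A := Classical.arbitrary A
    have : Nr * εm = ∑ _j : A, εm := by
      rw [Finset.sum_const, Finset.card_univ, nsmul_eq_mul, hNr]
    have hle : Nr * εm ≤ 1 := by
      rw [this, ← hBrow i0]
      exact Finset.sum_le_sum fun j _ => hεm_le i0 j
    rw [hγ]; linarith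
  -- iterated contraction
  have hcontr : ∀ (t : ℕ) (v : A → ℝ), ∑ i, v i = 0 →
      ∑ j, |(v ᵥ* B ^ t) j| ≤ γ ^ t * ∑ i, |v i| := by
    intro t
    induction t with
    | zero => intro v _; simp [Matrix.vecMul_one]
    | succ t ih =>
      intro v hv
      have hBt := pow_stoch B hBnn hBrow t
      have hz : ∑ j, (v ᵥ* B ^ t) j = 0 := by
        rw [vecMul_sum_eq (B ^ t) hBt.2 v, hv]
      have hd := dobrushin B εm hεm_le hBrow (v ᵥ* B ^ t) hz
      have hrw : ∀ j, ((v ᵥ* B ^ t) ᵥ* B) j = ∑ i, (v ᵥ* B ^ t) i * B i j := fun j => rfl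
      calc ∑ j, |(v ᵥ* B ^ (t+1)) j| = ∑ j, |((v ᵥ* B ^ t) ᵥ* B) j| := by
            rw [pow_succ, ← Matrix.vecMul_vecMul]
        _ ≤ (1 - Nr * εm) * ∑ i, |(v ᵥ* B ^ t) i| := by
            simp only [hrw]; exact hd
        _ ≤ γ * (γ ^ t * ∑ i, |v i|) := by
            rw [← hγ]
            exact mul_le_mul_of_nonneg_left (ih v hv) hγ0
        _ = γ ^ (t+1) * ∑ i, |v i| := by ring
  -- choose the number of iterations
  obtain ⟨t₀, ht₀⟩ := exists_pow_lt_of_lt_one (show (0:ℝ) < 1 / (2 * Nr) by positivity) hγ1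
  set K : ℕ := K₀ * t₀ with hKdef
  set M : Matrix A A ℝ := ∑ k ∈ Finset.range K, D ^ k * (D ^ k)ᵀ with hM
  refine ⟨M, (K : ℝ) + 1, by positivity, ?_, ?_⟩
  · intro i j
    have hMij : M i j = ∑ k ∈ Finset.range K, ∑ l, (D ^ k) i l * (D ^ k) j l := by
      rw [hM, Matrix.sum_apply]
      exact Finset.sum_congr rfl fun k _ => by
        rw [Matrix.mul_apply]
        exact Finset.sum_congr rfl fun l _ => by rw [Matrix.transpose_apply]
    constructor
    · rw [hMij]
      exact Finset.sum_nonneg fun k _ => Finset.sum_nonneg fun l _ =>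
        mul_nonneg ((hDpow k).1 i l) ((hDpow k).1 j l)
    · rw [hMij]
      calc ∑ k ∈ Finset.range K, ∑ l, (D ^ k) i l * (D ^ k) j l
          ≤ ∑ k ∈ Finset.range K, ∑ l, (D ^ k) i l * 1 := by
            refine Finset.sum_le_sum fun k _ => Finset.sum_le_sum fun l _ => ?_
            exact mul_le_mul_of_nonneg_left
              (entry_le_one (D ^ k) (hDpow k).1 (hDpow k).2 j l) ((hDpow k).1 i l)
        _ = ∑ k ∈ Finset.range K, (1:ℝ) := by
            refine Finset.sum_congr rfl fun k _ => ?_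
            simp only [mul_one]; exact (hDpow k).2 i
        _ ≤ (K : ℝ) + 1 := by simp
  · intro v hv
    set w : ℕ → (A → ℝ) := fun k => v ᵥ* D ^ k with hw
    set f : ℕ → ℝ := fun k => ∑ i, (w k i) ^ 2 with hf
    set u : A → ℝ := fun i => (∑ j, S j i * v j) - v i with hu
    have huv : u = v ᵥ* S - v := by
      funext i
      simp only [hu, Pi.sub_apply, Matrix.vecMul, dotProduct]
      congr 1
      exact Finset.sum_congr rfl fun j _ => mul_comm _ _
    have hsplit : ∀ (X : Matrix A A ℝ),
        (∑ i, ((∑ j, (X i j + X j i) * v j) * u i))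
        = ((X *ᵥ v) ⬝ᵥ u) + ((v ᵥ* X) ⬝ᵥ u) := by
      intro X
      simp only [dotProduct, Matrix.mulVec, Matrix.vecMul]
      rw [← Finset.sum_add_distrib]
      refine Finset.sum_congr rfl fun i _ => ?_
      rw [← add_mul]
      congr 1
      rw [← Finset.sum_add_distrib]
      exact Finset.sum_congr rfl fun j _ => by ring
    have hMsum : ∀ i j, M i j + M j i
        = ∑ k ∈ Finset.range K, ((D ^ k * (D ^ k)ᵀ) i j + (D ^ k * (D ^ k)ᵀ) j i) := by
      intro i j
      rw [hM, Matrix.sum_apply, Matrix.sum_apply, Finset.sum_add_distrib]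
    have hLHS : ∑ i, (∑ j, (M i j + M j i) * v j) * u i
        = ∑ k ∈ Finset.range K,
            ∑ i, ((∑ j, ((D ^ k * (D ^ k)ᵀ) i j + (D ^ k * (D ^ k)ᵀ) j i) * v j) * u i) := by
      rw [← Finset.sum_comm]
      refine Finset.sum_congr rfl fun i _ => ?_
      rw [← Finset.sum_mul]
      congr 1
      rw [Finset.sum_comm]
      refine Finset.sum_congr rfl fun j _ => ?_
      rw [hMsum i j, Finset.sum_mul]
    have hSD : ∀ k : ℕ, S * D ^ k = (2:ℝ) • D ^ (k+1) - D ^ k := by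
      intro k
      have h2D : (2:ℝ) • D = 1 + S := by
        rw [hDdef, smul_smul]; norm_num
      have hS : S = (2:ℝ) • D - 1 := by rw [h2D]; abel
      calc S * D ^ k = ((2:ℝ) • D - 1) * D ^ k := by rw [← hS]
        _ = (2:ℝ) • (D * D ^ k) - D ^ k := by
            rw [Matrix.sub_mul, Matrix.smul_mul, Matrix.one_mul]
        _ = (2:ℝ) • D ^ (k+1) - D ^ k := by rw [← pow_succ']
    have huD : ∀ k : ℕ, u ᵥ* D ^ k = (2:ℝ) • w (k+1) - (2:ℝ) • w k := by
      intro k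
      rw [huv, Matrix.sub_vecMul, Matrix.vecMul_vecMul, hSD k]
      funext j
      simp only [Pi.sub_apply, Pi.smul_apply, Matrix.vecMul, dotProduct,
        Matrix.sub_apply, Matrix.smul_apply, smul_eq_mul, mul_sub, Finset.sum_sub_distrib, hw]
      have h1 : ∑ i, v i * (2 * (D ^ (k+1)) i j) = 2 * ∑ i, v i * (D ^ (k+1)) i j := by
        rw [Finset.mul_sum]
        exact Finset.sum_congr rfl fun i _ => by ring
      rw [h1]
      ring_nf
    have hTk : ∀ k : ℕ,
        ∑ i, ((∑ j, ((D ^ k * (D ^ k)ᵀ) i j + (D ^ k * (D ^ k)ᵀ) j i) * v j) * u i)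
        ≤ 2 * f (k+1) - 2 * f k := by
      intro k
      rw [hsplit]
      have hXv : (D ^ k * (D ^ k)ᵀ) *ᵥ v = D ^ k *ᵥ (w k) := by
        rw [← Matrix.mulVec_mulVec, Matrix.mulVec_transpose]
      have hvX : v ᵥ* (D ^ k * (D ^ k)ᵀ) = D ^ k *ᵥ (w k) := by
        rw [← Matrix.vecMul_vecMul, Matrix.vecMul_transpose]
      rw [hXv, hvX, aux_dot, huD k]
      have hdot : (w k) ⬝ᵥ ((2:ℝ) • w (k+1) - (2:ℝ) • w k)
          = 2 * ((w k) ⬝ᵥ (w (k+1))) - 2 * ((w k) ⬝ᵥ (w k)) := by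
        rw [dotProduct_sub, dotProduct_smul, dotProduct_smul,
          smul_eq_mul, smul_eq_mul]
      rw [hdot]
      have hcs : 4 * ((w k) ⬝ᵥ (w (k+1))) ≤ 2 * f (k+1) + 2 * f k := by
        have : ∀ i : A, 4 * (w k i * w (k+1) i) ≤ 2 * (w (k+1) i) ^ 2 + 2 * (w k i) ^ 2 :=
          fun i => by nlinarith [sq_nonneg (w k i - w (k+1) i)]
        calc 4 * ((w k) ⬝ᵥ (w (k+1))) = ∑ i, 4 * (w k i * w (k+1) i) := by
              rw [dotProduct, Finset.mul_sum]
          _ ≤ ∑ i, (2 * (w (k+1) i) ^ 2 + 2 * (w k i) ^ 2) :=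
              Finset.sum_le_sum fun i _ => this i
          _ = 2 * f (k+1) + 2 * f k := by
              rw [Finset.sum_add_distrib, hf, ← Finset.mul_sum, ← Finset.mul_sum]
      have hfk : (w k) ⬝ᵥ (w k) = f k := by
        rw [dotProduct, hf]
        exact Finset.sum_congr rfl fun i _ => (sq (w k i)) ▸ (pow_two (w k i)).symm
      rw [hfk]
      linarith
    have htel : ∑ k ∈ Finset.range K, (2 * f (k+1) - 2 * f k) = 2 * f K - 2 * f 0 :=
      Finset.sum_range_sub (fun k => 2 * f k) K
    have hf0 : f 0 = ∑ i, v i ^ 2 := by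
      rw [hf]
      refine Finset.sum_congr rfl fun i _ => ?_
      have : w 0 = v := by rw [hw]; simp [Matrix.vecMul_one]
      rw [this]
    have hfK : f K ≤ (1/4) * ∑ i, v i ^ 2 := by
      have hwK : ∑ j, |w K j| ≤ γ ^ t₀ * ∑ i, |v i| := by
        have : w K = v ᵥ* B ^ t₀ := by rw [hw, hBdef, ← pow_mul, ← hKdef]
        rw [this]
        exact hcontr t₀ v hv
      have habs_nn : (0:ℝ) ≤ ∑ i, |v i| := Finset.sum_nonneg fun i _ => abs_nonneg _
      have hwK_nn : (0:ℝ) ≤ ∑ j, |w K j| := Finset.sum_nonneg fun j _ => abs_nonneg _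
      have h1 : f K ≤ (∑ j, |w K j|) ^ 2 := by
        rw [hf]
        calc ∑ i, (w K i) ^ 2 = ∑ i, |w K i| ^ 2 := by
              exact Finset.sum_congr rfl fun i _ => (sq_abs _).symm
          _ ≤ (∑ i, |w K i|) ^ 2 :=
              Finset.sum_sq_le_sq_sum_of_nonneg fun i _ => abs_nonneg _
      have h2 : (∑ j, |w K j|) ^ 2 ≤ (γ ^ t₀ * ∑ i, |v i|) ^ 2 := by
        apply pow_le_pow_left₀ hwK_nn hwK
      have hγt : γ ^ t₀ * ∑ i, |v i| ≤ (1 / (2 * Nr)) * ∑ i, |v i| :=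
        mul_le_mul_of_nonneg_right (le_of_lt ht₀) habs_nn
      have hγt_nn : (0:ℝ) ≤ γ ^ t₀ * ∑ i, |v i| := mul_nonneg (pow_nonneg hγ0 t₀) habs_nn
      have h3 : (γ ^ t₀ * ∑ i, |v i|) ^ 2 ≤ ((1 / (2 * Nr)) * ∑ i, |v i|) ^ 2 :=
        pow_le_pow_left₀ hγt_nn hγt 2
      have hcs : (∑ i, |v i|) ^ 2 ≤ Nr * ∑ i, v i ^ 2 := by
        have := Finset.sum_mul_sq_le_sq_mul_sq Finset.univ (fun i : A => |v i|) (fun _ => (1:ℝ))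
        simp only [mul_one, one_pow] at this
        calc (∑ i, |v i|) ^ 2 ≤ (∑ i, |v i| ^ 2) * ∑ _i : A, (1:ℝ) := this
          _ = Nr * ∑ i, v i ^ 2 := by
              rw [Finset.sum_const, Finset.card_univ, nsmul_eq_mul, mul_one]
              rw [mul_comm]
              congr 1
              exact Finset.sum_congr rfl fun i _ => sq_abs _
      have hNr0 : (0:ℝ) < Nr := by linarith
      have h4 : ((1 / (2 * Nr)) * ∑ i, |v i|) ^ 2 = (∑ i, |v i|) ^ 2 / (4 * Nr ^ 2) := by
        field_simp
        try ring
        try exact Or.inl trivial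
      have h5 : (∑ i, |v i|) ^ 2 / (4 * Nr ^ 2) ≤ (Nr * ∑ i, v i ^ 2) / (4 * Nr ^ 2) :=
        div_le_div_of_nonneg_right hcs (by positivity)
      have h6 : (Nr * ∑ i, v i ^ 2) / (4 * Nr ^ 2) ≤ (1/4) * ∑ i, v i ^ 2 := by
        rw [div_le_iff₀ (by positivity)]
        have hsq_nn : (0:ℝ) ≤ ∑ i, v i ^ 2 := Finset.sum_nonneg fun i _ => sq_nonneg _
        nlinarith [sq_nonneg Nr]
      calc f K ≤ (∑ j, |w K j|) ^ 2 := h1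
        _ ≤ (γ ^ t₀ * ∑ i, |v i|) ^ 2 := h2
        _ ≤ ((1 / (2 * Nr)) * ∑ i, |v i|) ^ 2 := h3
        _ = (∑ i, |v i|) ^ 2 / (4 * Nr ^ 2) := h4
        _ ≤ (Nr * ∑ i, v i ^ 2) / (4 * Nr ^ 2) := h5
        _ ≤ (1/4) * ∑ i, v i ^ 2 := h6
    calc ∑ i, (∑ j, (M i j + M j i) * v j) * u i
        ≤ 2 * f K - 2 * f 0 := by
          rw [hLHS, ← htel]
          exact Finset.sum_le_sum fun k _ => hTk k
      _ ≤ - (3/2) * ∑ i, v i ^ 2 := by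
          have hsq_nn : (0:ℝ) ≤ ∑ i, v i ^ 2 :=
            Finset.sum_nonneg fun i _ => sq_nonneg _
          rw [hf0]
          linarith [hfK]

end PinAux

namespace PinAuxG

open Finset Matrix

set_option linter.unusedSectionVars false
set_option maxHeartbeats 1000000

variable {V : Type*} [Fintype V] [DecidableEq V]

lemma gap_bddAbove (E : Finset (V × V)) :
    BddAbove {w : ℝ | ∃ S U : Finset V, Disjoint S U ∧
    w = |((E.filter fun e => e.1 ∈ S ∧ e.2 ∈ U).card : ℝ) / (E.card : ℝ) -
      ((S.card : ℝ) * (U.card : ℝ)) / ((Fintype.card V : ℝ) * ((Fintype.card V : ℝ) - 1))|} := by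
  have hsub : {w : ℝ | ∃ S U : Finset V, Disjoint S U ∧
      w = |((E.filter fun e => e.1 ∈ S ∧ e.2 ∈ U).card : ℝ) / (E.card : ℝ) -
        ((S.card : ℝ) * (U.card : ℝ)) / ((Fintype.card V : ℝ) * ((Fintype.card V : ℝ) - 1))|}
      ⊆ Set.range (fun p : Finset V × Finset V =>
        |((E.filter fun e => e.1 ∈ p.1 ∧ e.2 ∈ p.2).card : ℝ) / (E.card : ℝ) -
          ((p.1.card : ℝ) * (p.2.card : ℝ)) /
            ((Fintype.card V : ℝ) * ((Fintype.card V : ℝ) - 1))|) := by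
    rintro w ⟨S, U, _, rfl⟩
    exact ⟨(S, U), rfl⟩
  exact ((Set.finite_range _).subset hsub).bddAbove

lemma gap_bound (E : Finset (V × V)) (S U : Finset V) (h : Disjoint S U) :
    |((E.filter fun e => e.1 ∈ S ∧ e.2 ∈ U).card : ℝ) / (E.card : ℝ) -
      ((S.card : ℝ) * (U.card : ℝ)) / ((Fintype.card V : ℝ) * ((Fintype.card V : ℝ) - 1))|
      ≤ mixingGap E :=
  le_csSup (gap_bddAbove E) ⟨S, U, h, rfl⟩

lemma gap_nonneg (E : Finset (V × V)) : 0 ≤ mixingGap E := by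
  have h := gap_bound E ∅ ∅ (disjoint_bot_left)
  simpa using h

lemma count_powerset (S : Finset V) (u v : V) (hu : u ∈ S) (hv : v ∈ S) (huv : u ≠ v) :
    (S.powerset.filter fun T => u ∈ T ∧ v ∉ T).card = 2 ^ (S.card - 2) := by
  have hcard : ((S.erase u).erase v).powerset.card = 2 ^ (S.card - 2) := by
    rw [Finset.card_powerset, Finset.card_erase_of_mem, Finset.card_erase_of_mem hu]
    · congr 1
    · exact Finset.mem_erase.mpr ⟨huv.symm, hv⟩
  rw [← hcard]
  apply Finset.card_bij' (fun T _ => T.erase u) (fun T' _ => insert u T')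
  · intro T hT
    simp only [Finset.mem_filter] at hT
    exact Finset.insert_erase hT.2.1
  · intro T' hT'
    rw [Finset.mem_powerset] at hT'
    apply Finset.erase_insert
    intro hc
    have := hT' hc
    rw [Finset.mem_erase, Finset.mem_erase] at this
    exact this.2.1 rfl
  · intro T hT
    simp only [Finset.mem_filter, Finset.mem_powerset] at hT
    obtain ⟨hTS, huT, hvT⟩ := hT
    rw [Finset.mem_powerset]
    intro x hx
    rw [Finset.mem_erase] at hx
    rw [Finset.mem_erase, Finset.mem_erase]
    exact ⟨fun hxv => hvT (hxv ▸ hx.2), hx.1, hTS hx.2⟩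
  · intro T' hT'
    rw [Finset.mem_powerset] at hT'
    have hu'not : u ∉ T' := fun hc => by
      have := hT' hc
      rw [Finset.mem_erase, Finset.mem_erase] at this
      exact this.2.1 rfl
    have hv'not : v ∉ T' := fun hc => by
      have := hT' hc
      rw [Finset.mem_erase] at this
      exact this.1 rfl
    simp only [Finset.mem_filter, Finset.mem_powerset]
    refine ⟨?_, Finset.mem_insert_self u T', ?_⟩
    · intro x hx
      rcases Finset.mem_insert.mp hx with rfl | hx'
      · exact hu
      · have := hT' hx'
        rw [Finset.mem_erase, Finset.mem_erase] at this
        exact this.2.2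
    · rw [Finset.mem_insert]
      push_neg
      exact ⟨huv.symm, hv'not⟩

lemma sum_cross_eq (E : Finset (V × V)) (hloop : ∀ e ∈ E, e.1 ≠ e.2) (S : Finset V) :
    ∑ T ∈ S.powerset, (E.filter fun e => e.1 ∈ T ∧ e.2 ∈ S \ T).card
      = (E.filter fun e => e.1 ∈ S ∧ e.2 ∈ S).card * 2 ^ (S.card - 2) := by
  have h1 : ∀ T ∈ S.powerset, (E.filter fun e => e.1 ∈ T ∧ e.2 ∈ S \ T).card
      = ∑ e ∈ E, if e.1 ∈ T ∧ e.2 ∈ S \ T then 1 else 0 := fun T _ => Finset.card_filter _ _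
  rw [Finset.sum_congr rfl h1, Finset.sum_comm]
  have h2 : ∀ e ∈ E, (∑ T ∈ S.powerset, if e.1 ∈ T ∧ e.2 ∈ S \ T then 1 else 0)
      = if e.1 ∈ S ∧ e.2 ∈ S then 2 ^ (S.card - 2) else 0 := by
    intro e he
    rw [← Finset.card_filter]
    by_cases hmem : e.1 ∈ S ∧ e.2 ∈ S
    · rw [if_pos hmem]
      rw [show (S.powerset.filter fun T => e.1 ∈ T ∧ e.2 ∈ S \ T)
          = (S.powerset.filter fun T => e.1 ∈ T ∧ e.2 ∉ T) from ?_]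
      · exact count_powerset S e.1 e.2 hmem.1 hmem.2 (hloop e he)
      · apply Finset.filter_congr
        intro T _
        rw [Finset.mem_sdiff]
        constructor
        · rintro ⟨h1', h2'⟩; exact ⟨h1', h2'.2⟩
        · rintro ⟨h1', h2'⟩; exact ⟨h1', hmem.2, h2'⟩
    · rw [if_neg hmem, Finset.card_eq_zero, Finset.filter_eq_empty_iff]
      intro T hT
      rw [Finset.mem_powerset] at hT
      rintro ⟨hT1, hT2⟩
      rw [Finset.mem_sdiff] at hT2
      exact hmem ⟨hT hT1, hT2.1⟩
  rw [Finset.sum_congr rfl h2, ← Finset.sum_filter, Finset.sum_const, smul_eq_mul]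

lemma sum_tcard_eq (S : Finset V) :
    ∑ T ∈ S.powerset, T.card * (S \ T).card
      = (S.card * S.card - S.card) * 2 ^ (S.card - 2) := by
  have h1 : ∀ T ∈ S.powerset, T.card * (S \ T).card
      = ∑ p ∈ S ×ˢ S, if p.1 ∈ T ∧ p.2 ∈ S \ T then 1 else 0 := by
    intro T hT
    rw [Finset.mem_powerset] at hT
    rw [← Finset.card_product, ← Finset.card_filter]
    congr 1
    ext p
    simp only [Finset.mem_product, Finset.mem_filter, Finset.mem_sdiff]
    constructor
    · rintro ⟨h1', h2'⟩; exact ⟨⟨hT h1', h2'.1⟩, h1', h2'⟩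
    · rintro ⟨_, h1', h2'⟩; exact ⟨h1', h2'⟩
  rw [Finset.sum_congr rfl h1, Finset.sum_comm]
  have h2 : ∀ p ∈ S ×ˢ S, (∑ T ∈ S.powerset, if p.1 ∈ T ∧ p.2 ∈ S \ T then 1 else 0)
      = if p.1 ≠ p.2 then 2 ^ (S.card - 2) else 0 := by
    intro p hp
    rw [Finset.mem_product] at hp
    rw [← Finset.card_filter]
    by_cases hne : p.1 ≠ p.2
    · rw [if_pos hne]
      rw [show (S.powerset.filter fun T => p.1 ∈ T ∧ p.2 ∈ S \ T)
          = (S.powerset.filter fun T => p.1 ∈ T ∧ p.2 ∉ T) from ?_]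
      · exact count_powerset S p.1 p.2 hp.1 hp.2 hne
      · apply Finset.filter_congr
        intro T _
        rw [Finset.mem_sdiff]
        constructor
        · rintro ⟨h1', h2'⟩; exact ⟨h1', h2'.2⟩
        · rintro ⟨h1', h2'⟩; exact ⟨h1', hp.2, h2'⟩
    · rw [if_neg hne, Finset.card_eq_zero, Finset.filter_eq_empty_iff]
      push_neg at hne
      intro T _
      rintro ⟨hT1, hT2⟩
      rw [Finset.mem_sdiff] at hT2
      exact hT2.2 (hne ▸ hT1)
  rw [Finset.sum_congr rfl h2, ← Finset.sum_filter, Finset.sum_const, smul_eq_mul]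
  congr 1
  rw [show ((S ×ˢ S).filter fun p => p.1 ≠ p.2) = S.offDiag from ?_]
  · exact Finset.offDiag_card S
  · ext p
    simp [Finset.mem_offDiag, Finset.mem_product, Finset.mem_filter]
    tauto

lemma diag_est (E : Finset (V × V)) (hloop : ∀ e ∈ E, e.1 ≠ e.2) (S : Finset V) :
    |((E.filter fun e => e.1 ∈ S ∧ e.2 ∈ S).card : ℝ) / (E.card : ℝ)
      - ((S.card : ℝ) * ((S.card : ℝ) - 1)) / ((Fintype.card V : ℝ) * ((Fintype.card V : ℝ) - 1))|
      ≤ 4 * mixingGap E := by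
  by_cases hs : S.card ≤ 1
  · have hd : (E.filter fun e => e.1 ∈ S ∧ e.2 ∈ S) = ∅ := by
      rw [Finset.filter_eq_empty_iff]
      rintro e he ⟨h1, h2⟩
      have : 1 < S.card := Finset.one_lt_card.mpr ⟨e.1, h1, e.2, h2, hloop e he⟩
      omega
    have hzero : ((S.card : ℝ) * ((S.card : ℝ) - 1)) = 0 := by
      have h01 : S.card = 0 ∨ S.card = 1 := by omega
      rcases h01 with h | h <;> rw [h] <;> norm_num
    rw [hd]
    simp only [Finset.card_empty, Nat.cast_zero, zero_div, hzero, zero_div, sub_zero, abs_zero]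
    have := gap_nonneg E
    linarith
  · push_neg at hs
    have hs2 : 2 ≤ S.card := hs
    set s : ℕ := S.card with hsdef
    set nn : ℝ := (Fintype.card V : ℝ) with hnn
    set mm : ℝ := (E.card : ℝ) with hmm
    set dc : ℕ := (E.filter fun e => e.1 ∈ S ∧ e.2 ∈ S).card with hdc
    -- per-subset bound and summation
    have hper : ∀ T ∈ S.powerset,
        |((E.filter fun e => e.1 ∈ T ∧ e.2 ∈ S \ T).card : ℝ) / mm
          - ((T.card : ℝ) * (((S \ T).card : ℝ))) / (nn * (nn - 1))| ≤ mixingGap E := by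
      intro T hT
      exact gap_bound E T (S \ T) (Finset.disjoint_sdiff)
    have habs : |∑ T ∈ S.powerset,
        (((E.filter fun e => e.1 ∈ T ∧ e.2 ∈ S \ T).card : ℝ) / mm
          - ((T.card : ℝ) * (((S \ T).card : ℝ))) / (nn * (nn - 1)))|
        ≤ 2 ^ s * mixingGap E := by
      calc |∑ T ∈ S.powerset, _| ≤ ∑ T ∈ S.powerset, |(((E.filter fun e => e.1 ∈ T ∧ e.2 ∈ S \ T).card : ℝ) / mm
          - ((T.card : ℝ) * (((S \ T).card : ℝ))) / (nn * (nn - 1)))| :=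
            Finset.abs_sum_le_sum_abs _ _
        _ ≤ ∑ T ∈ S.powerset, mixingGap E := Finset.sum_le_sum hper
        _ = 2 ^ s * mixingGap E := by
            rw [Finset.sum_const, Finset.card_powerset, nsmul_eq_mul]
            push_cast
            ring
    have hsum_eq : ∑ T ∈ S.powerset,
        (((E.filter fun e => e.1 ∈ T ∧ e.2 ∈ S \ T).card : ℝ) / mm
          - ((T.card : ℝ) * (((S \ T).card : ℝ))) / (nn * (nn - 1)))
        = ((dc : ℝ) * 2 ^ (s - 2)) / mm - ((s : ℝ) * ((s : ℝ) - 1) * 2 ^ (s - 2)) / (nn * (nn - 1)) := by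
      rw [Finset.sum_sub_distrib]
      congr 1
      · rw [← Finset.sum_div]
        congr 1
        have hid := sum_cross_eq E hloop S
        have hcast := congrArg (fun t : ℕ => (t : ℝ)) hid
        push_cast at hcast
        exact hcast
      · rw [← Finset.sum_div]
        congr 1
        have h2 := sum_tcard_eq S
        have hcast := congrArg (fun t : ℕ => (t : ℝ)) h2
        have hle : s ≤ s * s := Nat.le_mul_of_pos_left s (by omega)
        push_cast at hcast
        rw [Nat.cast_sub (show S.card ≤ S.card * S.card from hle)] at hcast
        push_cast at hcast
        rw [hcast]
        ring
    have hkey : |(dc : ℝ) / mm - ((s : ℝ) * ((s : ℝ) - 1)) / (nn * (nn - 1))| * 2 ^ (s - 2)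
        ≤ 2 ^ s * mixingGap E := by
      rw [hsum_eq] at habs
      have : ((dc : ℝ) * 2 ^ (s - 2)) / mm - ((s : ℝ) * ((s : ℝ) - 1) * 2 ^ (s - 2)) / (nn * (nn - 1))
          = ((dc : ℝ) / mm - ((s : ℝ) * ((s : ℝ) - 1)) / (nn * (nn - 1))) * 2 ^ (s - 2) := by
        ring
      rw [this, abs_mul, abs_of_nonneg (by positivity : (0:ℝ) ≤ (2:ℝ) ^ (s - 2))] at habs
      exact habs
    have hpow : (2:ℝ) ^ s = 4 * 2 ^ (s - 2) := by
      have hss : s - 2 + 2 = s := by omega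
      calc (2:ℝ) ^ s = 2 ^ (s - 2 + 2) := by rw [hss]
        _ = 4 * 2 ^ (s - 2) := by rw [pow_add]; ring
    rw [hpow] at hkey
    have hpos : (0:ℝ) < 2 ^ (s - 2) := by positivity
    nlinarith [hkey, hpos]

lemma marg_est (E : Finset (V × V)) (hloop : ∀ e ∈ E, e.1 ≠ e.2)
    (hn : 2 ≤ Fintype.card V) (S : Finset V) (side : Bool) :
    |(((E.filter fun e => (if side then e.1 else e.2) ∈ S).card : ℝ)) / (E.card : ℝ)
      - (S.card : ℝ) / (Fintype.card V : ℝ)| ≤ 5 * mixingGap E := by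
  classical
  set U : Finset V := Finset.univ \ S with hU
  have hdisjSU : Disjoint S U := Finset.disjoint_sdiff
  have hdisjUS : Disjoint U S := hdisjSU.symm
  set nn : ℝ := (Fintype.card V : ℝ) with hnn
  set mm : ℝ := (E.card : ℝ) with hmm
  set sr : ℝ := (S.card : ℝ) with hsr
  have hsub : S ⊆ Finset.univ := Finset.subset_univ S
  have hUcard : (U.card : ℝ) = nn - sr := by
    rw [hU, Finset.card_sdiff_of_subset hsub, Finset.card_univ]
    rw [Nat.cast_sub (Finset.card_le_univ S)]
  have hnn2 : (2:ℝ) ≤ nn := by rw [hnn]; exact_mod_cast hn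
  have hnn0 : nn ≠ 0 := by linarith
  have hnn1 : nn - 1 ≠ 0 := by linarith
  -- split the count
  have hsplitgen : (E.filter fun e => (if side then e.1 else e.2) ∈ S).card
      = (E.filter fun e => (if side then (e.1 ∈ S ∧ e.2 ∈ U) else (e.1 ∈ U ∧ e.2 ∈ S))).card
        + (E.filter fun e => e.1 ∈ S ∧ e.2 ∈ S).card := by
    cases side
    · simp only [if_false, Bool.false_eq_true]
      have h := Finset.card_filter_add_card_filter_not
        (s := E.filter fun e => e.2 ∈ S) (p := fun e => e.1 ∈ S)
      rw [Finset.filter_filter, Finset.filter_filter] at h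
      have e1 : (E.filter fun e => e.2 ∈ S ∧ e.1 ∈ S) = (E.filter fun e => e.1 ∈ S ∧ e.2 ∈ S) := by
        apply Finset.filter_congr; intro e _; tauto
      have e2 : (E.filter fun e => e.2 ∈ S ∧ ¬ e.1 ∈ S)
          = (E.filter fun e => e.1 ∈ U ∧ e.2 ∈ S) := by
        apply Finset.filter_congr; intro e _
        simp only [hU, Finset.mem_sdiff, Finset.mem_univ, true_and]
        try tauto
      rw [e1, e2] at h
      omega
    · simp only [if_true]
      have h := Finset.card_filter_add_card_filter_not
        (s := E.filter fun e => e.1 ∈ S) (p := fun e => e.2 ∈ S)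
      rw [Finset.filter_filter, Finset.filter_filter] at h
      have e1 : (E.filter fun e => e.1 ∈ S ∧ e.2 ∈ S) = (E.filter fun e => e.1 ∈ S ∧ e.2 ∈ S) := rfl
      have e2 : (E.filter fun e => e.1 ∈ S ∧ ¬ e.2 ∈ S)
          = (E.filter fun e => e.1 ∈ S ∧ e.2 ∈ U) := by
        apply Finset.filter_congr; intro e _
        simp only [hU, Finset.mem_sdiff, Finset.mem_univ, true_and]
        try tauto
      rw [e2] at h
      omega
  -- the two estimates
  have hcross : |(((E.filter fun e => (if side then (e.1 ∈ S ∧ e.2 ∈ U) else (e.1 ∈ U ∧ e.2 ∈ S))).card : ℝ)) / mm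
      - (sr * (nn - sr)) / (nn * (nn - 1))| ≤ mixingGap E := by
    cases side
    · simp only [Bool.false_eq_true, if_false]
      have h := gap_bound E U S hdisjUS
      rw [hUcard] at h
      calc |(((E.filter fun e => e.1 ∈ U ∧ e.2 ∈ S).card : ℝ)) / mm
          - (sr * (nn - sr)) / (nn * (nn - 1))|
          = |(((E.filter fun e => e.1 ∈ U ∧ e.2 ∈ S).card : ℝ)) / mm
          - ((nn - sr) * sr) / (nn * (nn - 1))| := by rw [mul_comm sr (nn - sr)]
        _ ≤ mixingGap E := h
    · simp only [if_true]
      have h := gap_bound E S U hdisjSU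
      rw [hUcard] at h
      exact h
  have hdiag := diag_est E hloop S
  -- combine
  have hfrac : (sr * (nn - sr)) / (nn * (nn - 1)) + (sr * (sr - 1)) / (nn * (nn - 1))
      = sr / nn := by
    field_simp
    ring
  have hcast : (((E.filter fun e => (if side then e.1 else e.2) ∈ S).card : ℝ))
      = (((E.filter fun e => (if side then (e.1 ∈ S ∧ e.2 ∈ U) else (e.1 ∈ U ∧ e.2 ∈ S))).card : ℝ))
        + (((E.filter fun e => e.1 ∈ S ∧ e.2 ∈ S).card : ℝ)) := by
    exact_mod_cast congrArg (fun t : ℕ => (t : ℝ)) hsplitgen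
  have hsum : (((E.filter fun e => (if side then e.1 else e.2) ∈ S).card : ℝ)) / mm - sr / nn
      = ((((E.filter fun e => (if side then (e.1 ∈ S ∧ e.2 ∈ U) else (e.1 ∈ U ∧ e.2 ∈ S))).card : ℝ)) / mm
          - (sr * (nn - sr)) / (nn * (nn - 1)))
        + ((((E.filter fun e => e.1 ∈ S ∧ e.2 ∈ S).card : ℝ)) / mm
          - (sr * (sr - 1)) / (nn * (nn - 1))) := by
    rw [hcast, ← hfrac]
    ring
  rw [hsum]
  calc |_ + _| ≤ _ + _ := abs_add_le _ _
    _ ≤ mixingGap E + 4 * mixingGap E := add_le_add hcross hdiag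
    _ = 5 * mixingGap E := by ring

end PinAuxG

namespace PinAuxD

open Finset Matrix

open Finset

set_option linter.unusedSectionVars false
set_option maxHeartbeats 1000000

variable {V A : Type*} [Fintype V] [DecidableEq V] [Fintype A] [DecidableEq A]

lemma toff_self (E : Finset (V × V)) (ρ : ℝ) (P : A → A → ℝ) (φ : A → A → A → ℝ)
    (x : V → A) : Toff E ρ P φ x x = 0 := by
  simp [Toff]

lemma pinTrans_rowsum (E : Finset (V × V)) (ρ : ℝ) (P : A → A → ℝ) (φ : A → A → A → ℝ)
    (x : V → A) : ∑ y, pinTrans E ρ P φ x y = 1 := by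
  rw [← Finset.add_sum_erase _ _ (Finset.mem_univ x)]
  have h1 : pinTrans E ρ P φ x x = 1 - ∑ z, Toff E ρ P φ x z := by
    rw [pinTrans, if_pos rfl]
  have h2 : ∑ y ∈ Finset.univ.erase x, pinTrans E ρ P φ x y
      = ∑ y ∈ Finset.univ.erase x, Toff E ρ P φ x y := by
    refine Finset.sum_congr rfl fun y hy => ?_
    rw [pinTrans, if_neg (Ne.symm (Finset.mem_erase.mp hy).1)]
  have h3 : ∑ z, Toff E ρ P φ x z = ∑ y ∈ Finset.univ.erase x, Toff E ρ P φ x y := by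
    rw [← Finset.add_sum_erase _ _ (Finset.mem_univ x), toff_self, zero_add]
  rw [h1, h2, ← h3]
  ring

lemma stat_exp (E : Finset (V × V)) (ρ : ℝ) (P : A → A → ℝ) (φ : A → A → A → ℝ)
    (μ : (V → A) → ℝ) (hst : IsStationaryPin E ρ P φ μ) (f : (V → A) → ℝ) :
    ∑ x, μ x * (∑ y, pinTrans E ρ P φ x y * (f y - f x)) = 0 := by
  have h1 : ∀ x, ∑ y, pinTrans E ρ P φ x y * (f y - f x)
      = (∑ y, pinTrans E ρ P φ x y * f y) - f x := by
    intro x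
    simp only [mul_sub, Finset.sum_sub_distrib]
    rw [← Finset.sum_mul, pinTrans_rowsum, one_mul]
  simp only [h1, mul_sub, Finset.sum_sub_distrib]
  have h2 : ∑ x, μ x * ∑ y, pinTrans E ρ P φ x y * f y = ∑ y : V → A, μ y * f y := by
    calc ∑ x, μ x * ∑ y, pinTrans E ρ P φ x y * f y
        = ∑ x, ∑ y, μ x * (pinTrans E ρ P φ x y * f y) := by
          simp_rw [Finset.mul_sum]
      _ = ∑ y : V → A, ∑ x, μ x * (pinTrans E ρ P φ x y * f y) := Finset.sum_comm
      _ = ∑ y : V → A, (∑ x, μ x * pinTrans E ρ P φ x y) * f y := by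
          refine Finset.sum_congr rfl fun y _ => ?_
          rw [Finset.sum_mul]
          exact Finset.sum_congr rfl fun x _ => by ring
      _ = ∑ y : V → A, μ y * f y := by
          refine Finset.sum_congr rfl fun y _ => ?_
          rw [hst.2.2 y]
  rw [h2]
  have h4 : ∀ x : V → A, ∑ y, pinTrans E ρ P φ x y * f x = f x := fun x => by
    rw [← Finset.sum_mul, pinTrans_rowsum, one_mul]
  simp only [h4]
  rw [sub_self]

lemma diff_filter_update (x : V → A) (u : V) (a : A) (hne : a ≠ x u) :
    (Finset.univ.filter fun v => x v ≠ Function.update x u a v) = {u} := by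
  ext v
  simp only [Finset.mem_filter, Finset.mem_univ, true_and, Finset.mem_singleton]
  by_cases hv : v = u
  · subst hv
    simp [Function.update_self, Ne.symm hne]
  · simp [Function.update_of_ne hv, hv]

lemma card_one_exists (x y : V → A)
    (h : (Finset.univ.filter fun v => x v ≠ y v).card = 1) :
    ∃ u a, a ≠ x u ∧ y = Function.update x u a := by
  obtain ⟨u, hu⟩ := Finset.card_eq_one.mp h
  have humem : u ∈ Finset.univ.filter fun v => x v ≠ y v := by rw [hu]; exact Finset.mem_singleton_self u
  rw [Finset.mem_filter] at humem
  refine ⟨u, y u, Ne.symm humem.2, ?_⟩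
  funext v
  by_cases hv : v = u
  · subst hv; rw [Function.update_self]
  · rw [Function.update_of_ne hv]
    by_contra hc
    have : v ∈ Finset.univ.filter fun v => x v ≠ y v := by
      rw [Finset.mem_filter]; exact ⟨Finset.mem_univ v, fun h' => hc h'.symm⟩
    rw [hu, Finset.mem_singleton] at this
    exact hv this

lemma toff_update (E : Finset (V × V)) (ρ : ℝ) (P : A → A → ℝ) (φ : A → A → A → ℝ)
    (x : V → A) (u : V) (a : A) (hne : a ≠ x u) :
    Toff E ρ P φ x (Function.update x u a)
      = (1 - ρ) * (1 / (Fintype.card V : ℝ)) * P (x u) a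
        + (ρ / (E.card : ℝ)) * ∑ e ∈ E.filter fun e => e.1 = u, φ (x u) a (x e.2) := by
  rw [Toff, diff_filter_update x u a hne]
  rw [if_pos (Finset.card_singleton u), Finset.sum_singleton, Function.update_self]

lemma sum_reindex (E : Finset (V × V)) (ρ : ℝ) (P : A → A → ℝ) (φ : A → A → A → ℝ)
    (x : V → A) (F : (V → A) → ℝ) :
    ∑ y, Toff E ρ P φ x y * F y
      = ∑ p ∈ (Finset.univ ×ˢ Finset.univ : Finset (V × A)).filter (fun p => p.2 ≠ x p.1),
          Toff E ρ P φ x (Function.update x p.1 p.2) * F (Function.update x p.1 p.2) := by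
  have hsplit := Finset.sum_filter_add_sum_filter_not Finset.univ
    (fun y : V → A => (Finset.univ.filter fun v => x v ≠ y v).card = 1)
    (fun y => Toff E ρ P φ x y * F y)
  have hzero : ∑ y ∈ Finset.univ.filter
      (fun y : V → A => ¬ (Finset.univ.filter fun v => x v ≠ y v).card = 1),
      Toff E ρ P φ x y * F y = 0 := by
    refine Finset.sum_eq_zero fun y hy => ?_
    rw [Finset.mem_filter] at hy
    rw [Toff, if_neg hy.2, zero_mul]
  have hmain : ∑ y ∈ Finset.univ.filter
      (fun y : V → A => (Finset.univ.filter fun v => x v ≠ y v).card = 1),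
      Toff E ρ P φ x y * F y
      = ∑ p ∈ (Finset.univ ×ˢ Finset.univ : Finset (V × A)).filter (fun p => p.2 ≠ x p.1),
          Toff E ρ P φ x (Function.update x p.1 p.2) * F (Function.update x p.1 p.2) := by
    symm
    apply Finset.sum_bij (fun (p : V × A) _ => Function.update x p.1 p.2)
    · intro p hp
      rw [Finset.mem_filter] at hp ⊢
      refine ⟨Finset.mem_univ _, ?_⟩
      rw [diff_filter_update x p.1 p.2 hp.2]
      exact Finset.card_singleton _
    · intro p hp q hq heq
      rw [Finset.mem_filter] at hp hq
      by_cases hpq : p.1 = q.1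
      · have h1 := congrFun heq p.1
        rw [Function.update_self, hpq, Function.update_self] at h1
        exact Prod.ext hpq h1
      · have := congrFun heq p.1
        rw [Function.update_self, Function.update_of_ne (fun hc => hpq hc)] at this
        exact absurd this hp.2
    · intro y hy
      rw [Finset.mem_filter] at hy
      obtain ⟨u, a, hne, rfl⟩ := card_one_exists x y hy.2
      exact ⟨(u, a), Finset.mem_filter.mpr ⟨Finset.mem_product.mpr
        ⟨Finset.mem_univ _, Finset.mem_univ _⟩, hne⟩, rfl⟩
    · intro p hp
      rfl
  rw [← hsplit, hzero, add_zero, hmain]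

lemma confType_update (x : V → A) (u : V) (a : A) (hne : a ≠ x u) (i : A) :
    confType (Function.update x u a) i
      = confType x i + (1 / (Fintype.card V : ℝ)) *
          ((if a = i then (1:ℝ) else 0) - (if x u = i then (1:ℝ) else 0)) := by
  have hV : (0:ℝ) < (Fintype.card V : ℝ) := by
    have : 0 < Fintype.card V := Fintype.card_pos_iff.mpr ⟨u⟩
    exact_mod_cast this
  by_cases hia : a = i
  · have hxu : ¬ (x u = i) := fun hc => hne (hia ▸ hc.symm ▸ rfl)
    have hfilt : (Finset.univ.filter fun v => Function.update x u a v = i)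
        = insert u (Finset.univ.filter fun v => x v = i) := by
      ext v
      simp only [Finset.mem_filter, Finset.mem_univ, true_and, Finset.mem_insert]
      by_cases hv : v = u
      · subst hv; simp [Function.update_self, hia]
      · simp [Function.update_of_ne hv, hv]
    have hnotmem : u ∉ (Finset.univ.filter fun v => x v = i) := by
      simp [hxu]
    rw [confType, confType, hfilt, Finset.card_insert_of_notMem hnotmem]
    rw [if_pos hia, if_neg hxu]
    push_cast
    field_simp
    try ring
  · by_cases hxu : x u = i
    · have hfilt : (Finset.univ.filter fun v => Function.update x u a v = i)
          = (Finset.univ.filter fun v => x v = i).erase u := by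
        ext v
        simp only [Finset.mem_filter, Finset.mem_univ, true_and, Finset.mem_erase]
        by_cases hv : v = u
        · subst hv; simp [Function.update_self, hia]
        · simp [Function.update_of_ne hv, hv]
      have hmem : u ∈ (Finset.univ.filter fun v => x v = i) := by
        simp [hxu]
      have hcard1 : 1 ≤ (Finset.univ.filter fun v => x v = i).card :=
        Finset.card_pos.mpr ⟨u, hmem⟩
      rw [confType, confType, hfilt, Finset.card_erase_of_mem hmem]
      rw [if_neg hia, if_pos hxu]
      rw [Nat.cast_sub hcard1]
      push_cast
      field_simp
      try ring
    · have hfilt : (Finset.univ.filter fun v => Function.update x u a v = i)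
          = (Finset.univ.filter fun v => x v = i) := by
        ext v
        simp only [Finset.mem_filter, Finset.mem_univ, true_and]
        by_cases hv : v = u
        · subst hv; simp [Function.update_self, hia, Ne.symm, hxu]
        · simp [Function.update_of_ne hv]
      rw [confType, confType, hfilt, if_neg hia, if_neg hxu]
      ring

lemma confType_sum_one (x : V → A) (hV : 0 < Fintype.card V) : ∑ i, confType x i = 1 := by
  have hfib : Finset.univ.card = ∑ i : A, (Finset.univ.filter fun v => x v = i).card :=
    Finset.card_eq_sum_card_fiberwise (fun v _ => Finset.mem_univ (x v))
  simp only [confType]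
  rw [← Finset.sum_div]
  rw [show ∑ i : A, ((Finset.univ.filter fun v => x v = i).card : ℝ)
      = ((∑ i : A, (Finset.univ.filter fun v => x v = i).card : ℕ) : ℝ) by push_cast; rfl]
  rw [← hfib, Finset.card_univ]
  have : (Fintype.card V : ℝ) ≠ 0 := by positivity
  field_simp

lemma quad_update (M : Matrix A A ℝ) (v : A → ℝ) (a b : A) (c : ℝ) :
    ∑ i, ∑ j, (v i + c * ((if a = i then (1:ℝ) else 0) - (if b = i then (1:ℝ) else 0))) * M i j
        * (v j + c * ((if a = j then (1:ℝ) else 0) - (if b = j then (1:ℝ) else 0)))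
      = (∑ i, ∑ j, v i * M i j * v j)
        + c * ((∑ j, (M a j + M j a) * v j) - (∑ j, (M b j + M j b) * v j))
        + c * c * (M a a - M a b - M b a + M b b) := by
  classical
  set d : A → ℝ := fun i => (if a = i then (1:ℝ) else 0) - (if b = i then (1:ℝ) else 0) with hd
  have haux : ∀ q : A → ℝ, ∑ i, d i * q i = q a - q b := by
    intro q
    simp only [hd, sub_mul, Finset.sum_sub_distrib, ite_mul, one_mul, zero_mul,
      Finset.sum_ite_eq, Finset.mem_univ, if_true]
  have hexp : ∀ i j, (v i + c * d i) * M i j * (v j + c * d j)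
      = v i * M i j * v j + c * (d i * (M i j * v j)) + c * (d j * (v i * M i j))
        + c * c * (d i * (M i j * d j)) := fun i j => by ring
  calc ∑ i, ∑ j, (v i + c * d i) * M i j * (v j + c * d j)
      = ∑ i, ∑ j, (v i * M i j * v j + c * (d i * (M i j * v j)) + c * (d j * (v i * M i j))
        + c * c * (d i * (M i j * d j))) := by
        exact Finset.sum_congr rfl fun i _ => Finset.sum_congr rfl fun j _ => hexp i j
    _ = (∑ i, ∑ j, v i * M i j * v j)
        + (∑ i, ∑ j, c * (d i * (M i j * v j)))
        + (∑ i, ∑ j, c * (d j * (v i * M i j)))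
        + (∑ i, ∑ j, c * c * (d i * (M i j * d j))) := by
        simp only [Finset.sum_add_distrib]
    _ = (∑ i, ∑ j, v i * M i j * v j)
        + c * ((∑ j, (M a j + M j a) * v j) - (∑ j, (M b j + M j b) * v j))
        + c * c * (M a a - M a b - M b a + M b b) := by
        have h1 : ∑ i, ∑ j, c * (d i * (M i j * v j)) = c * ((∑ j, M a j * v j) - (∑ j, M b j * v j)) := by
          rw [← haux (fun i => ∑ j, M i j * v j), Finset.mul_sum]
          refine Finset.sum_congr rfl fun i _ => ?_
          rw [Finset.mul_sum, Finset.mul_sum]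
          try exact Finset.sum_congr rfl fun j _ => by ring
        have h2 : ∑ i, ∑ j, c * (d j * (v i * M i j)) = c * ((∑ i, v i * M i a) - (∑ i, v i * M i b)) := by
          rw [Finset.sum_comm, ← haux (fun j => ∑ i, v i * M i j), Finset.mul_sum]
          refine Finset.sum_congr rfl fun j _ => ?_
          rw [Finset.mul_sum, Finset.mul_sum]
          try exact Finset.sum_congr rfl fun i _ => by ring
        have h3 : ∑ i, ∑ j, c * c * (d i * (M i j * d j))
            = c * c * ((M a a - M a b) - (M b a - M b b)) := by
          have hinner : ∀ i, ∑ j, M i j * d j = M i a - M i b := by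
            intro i
            rw [← haux (fun j => M i j)]
            exact Finset.sum_congr rfl fun j _ => by ring
          rw [← haux (fun i => M i a - M i b), Finset.mul_sum]
          refine Finset.sum_congr rfl fun i _ => ?_
          rw [← hinner i, Finset.mul_sum, Finset.mul_sum]
          try exact Finset.sum_congr rfl fun j _ => by ring
        rw [h1, h2, h3]
        have h4 : (∑ j, (M a j + M j a) * v j) - (∑ j, (M b j + M j b) * v j)
            = ((∑ j, M a j * v j) - (∑ j, M b j * v j)) + ((∑ i, v i * M i a) - (∑ i, v i * M i b)) := by
          simp only [add_mul, Finset.sum_add_distrib]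
          have e1 : ∑ j, M j a * v j = ∑ i, v i * M i a :=
            Finset.sum_congr rfl fun j _ => by ring
          have e2 : ∑ j, M j b * v j = ∑ i, v i * M i b :=
            Finset.sum_congr rfl fun j _ => by ring
          rw [e1, e2]
          ring
        rw [h4]
        ring

lemma fiber_sum {ι B : Type*} [Fintype B] [DecidableEq B] (s : Finset ι) (k : ι → B)
    (G : B → ℝ) : ∑ i ∈ s, G (k i) = ∑ ℓ, ((s.filter fun i => k i = ℓ).card : ℝ) * G ℓ := by
  rw [← Finset.sum_fiberwise s k (fun i => G (k i))]
  refine Finset.sum_congr rfl fun ℓ _ => ?_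
  rw [Finset.sum_congr rfl (fun i hi => by rw [(Finset.mem_filter.mp hi).2]),
    Finset.sum_const, nsmul_eq_mul]

lemma drift_bound [Nonempty A]
    (E : Finset (V × V)) (ρ : ℝ) (P : A → A → ℝ) (φ : A → A → A → ℝ) (R : A → A → ℝ)
    (hρ0 : 0 ≤ ρ) (hρ1 : ρ ≤ 1)
    (hP0 : ∀ i j, 0 ≤ P i j) (hProw : ∀ i, ∑ j, P i j = 1)
    (hR0 : ∀ i j, 0 ≤ R i j) (hRrow : ∀ i, ∑ j, R i j = 1)
    (hforget : ∀ i j ℓ, φ i j ℓ = R ℓ j)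
    (hE : E.Nonempty) (hloop : ∀ e ∈ E, e.1 ≠ e.2)
    (hV2 : 2 ≤ Fintype.card V)
    (M : Matrix A A ℝ) (CM : ℝ) (hCM : 0 < CM) (hMb : ∀ i j, 0 ≤ M i j ∧ M i j ≤ CM)
    (S : Matrix A A ℝ) (hS : ∀ i j, S i j = (1 - ρ) * P i j + ρ * R i j)
    (π : A → ℝ) (hπ0 : ∀ i, 0 ≤ π i) (hπ1 : ∑ i, π i = 1)
    (hπinv : ∀ i, ∑ j, S j i * π j = π i)
    (hlyap : ∀ v : A → ℝ, ∑ i, v i = 0 →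
      ∑ i, (∑ j, (M i j + M j i) * v j) * ((∑ j, S j i * v j) - v i)
        ≤ - (3/2) * ∑ i, v i ^ 2)
    (W : ℝ) (hW0 : 0 ≤ W)
    (hmarg : ∀ (T : Finset V) (side : Bool),
      |(((E.filter fun e => (if side then e.1 else e.2) ∈ T).card : ℝ)) / (E.card : ℝ)
        - (T.card : ℝ) / (Fintype.card V : ℝ)| ≤ 5 * W)
    (x : V → A) :
    (3/2) * ∑ i, (confType x i - π i) ^ 2
      ≤ - ((Fintype.card V : ℝ) * ∑ y, pinTrans E ρ P φ x y *
            ((∑ i, ∑ j, (confType y i - π i) * M i j * (confType y j - π j))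
             - (∑ i, ∑ j, (confType x i - π i) * M i j * (confType x j - π j))))
        + 40 * CM * (Fintype.card A : ℝ) * W
        + 4 * CM / (Fintype.card V : ℝ) := by
  classical
  set n : ℝ := (Fintype.card V : ℝ) with hn
  have hn2 : (2:ℝ) ≤ n := by rw [hn]; exact_mod_cast hV2
  have hn0 : (0:ℝ) < n := by linarith
  set m : ℝ := (E.card : ℝ) with hm
  have hm0 : (0:ℝ) < m := by
    rw [hm]; exact_mod_cast Finset.card_pos.mpr hE
  set θ : A → ℝ := confType x with hθ
  set v : A → ℝ := fun i => θ i - π i with hv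
  set w : A → ℝ := fun i => ∑ j, (M i j + M j i) * v j with hw
  set gq : (V → A) → ℝ :=
    fun y => ∑ i, ∑ j, (confType y i - π i) * M i j * (confType y j - π j) with hgq
  -- basic facts
  have hθ0 : ∀ i, 0 ≤ θ i := by
    intro i; rw [hθ]; unfold confType; positivity
  have hθ1 : ∑ i, θ i = 1 := confType_sum_one x (by omega)
  have hvsum : ∑ i, v i = 0 := by
    simp only [hv, Finset.sum_sub_distrib, hθ1, hπ1, sub_self]
  have hπle : ∀ i, π i ≤ 1 := by
    intro i
    calc π i ≤ ∑ j, π j := Finset.single_le_sum (fun j _ => hπ0 j) (Finset.mem_univ i)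
      _ = 1 := hπ1
  have hvabs : ∑ i, |v i| ≤ 2 := by
    calc ∑ i, |v i| ≤ ∑ i, (θ i + π i) := by
          refine Finset.sum_le_sum fun i _ => ?_
          rw [hv]
          calc |θ i - π i| ≤ |θ i| + |π i| := abs_sub _ _
            _ = θ i + π i := by rw [abs_of_nonneg (hθ0 i), abs_of_nonneg (hπ0 i)]
      _ = 2 := by rw [Finset.sum_add_distrib, hθ1, hπ1]; norm_num
  have hwabs : ∀ i, |w i| ≤ 4 * CM := by
    intro i
    calc |w i| ≤ ∑ j, |(M i j + M j i) * v j| := Finset.abs_sum_le_sum_abs _ _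
      _ ≤ ∑ j, 2 * CM * |v j| := by
          refine Finset.sum_le_sum fun j _ => ?_
          rw [abs_mul]
          have h1 : |M i j + M j i| ≤ 2 * CM := by
            have := hMb i j; have := hMb j i
            rw [abs_of_nonneg (by linarith)]
            linarith
          exact mul_le_mul_of_nonneg_right h1 (abs_nonneg _)
      _ = 2 * CM * ∑ j, |v j| := by rw [Finset.mul_sum]
      _ ≤ 2 * CM * 2 := by
          exact mul_le_mul_of_nonneg_left hvabs (by positivity)
      _ = 4 * CM := by ring
  -- the transition rates
  set Tp : V → A → ℝ := fun u a =>
    (1 - ρ) * (1 / n) * P (x u) a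
      + (ρ / m) * ∑ e ∈ E.filter fun e => e.1 = u, R (x e.2) a with hTpdef
  have hTp0 : ∀ u a, 0 ≤ Tp u a := by
    intro u a
    simp only [hTpdef]
    have h1 : (0:ℝ) ≤ ∑ e ∈ E.filter fun e => e.1 = u, R (x e.2) a :=
      Finset.sum_nonneg fun e _ => hR0 _ _
    have h2 := hP0 (x u) a
    apply add_nonneg
    · exact mul_nonneg (mul_nonneg (by linarith) (by positivity)) h2
    · exact mul_nonneg (by positivity) h1
  have hToffTp : ∀ u a, a ≠ x u → Toff E ρ P φ x (Function.update x u a) = Tp u a := by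
    intro u a hne
    rw [toff_update E ρ P φ x u a hne]
    simp only [hforget, hTpdef, hn, hm]
  have hTprow : ∀ u, ∑ a, Tp u a
      = (1 - ρ) * (1/n) + (ρ/m) * ((E.filter fun e => e.1 = u).card : ℝ) := by
    intro u
    simp only [hTpdef]
    rw [Finset.sum_add_distrib]
    congr 1
    · rw [← Finset.mul_sum, hProw, mul_one]
    · rw [← Finset.mul_sum]
      congr 1
      rw [Finset.sum_comm]
      rw [Finset.sum_congr rfl (fun e _ => hRrow (x e.2))]
      rw [Finset.sum_const, nsmul_eq_mul, mul_one]
  have hdeg : ∑ u, ((E.filter fun e => e.1 = u).card : ℝ) = m := by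
    calc ∑ u, ((E.filter fun e => e.1 = u).card : ℝ)
        = ∑ u, ((E.filter fun e => e.1 = u).card : ℝ) * 1 := by simp
      _ = ∑ e ∈ E, (1:ℝ) := (fiber_sum E (fun e => e.1) (fun _ => (1:ℝ))).symm
      _ = m := by rw [Finset.sum_const, nsmul_eq_mul, mul_one, hm]
  have hTptot : ∑ u, ∑ a, Tp u a = 1 := by
    rw [Finset.sum_congr rfl (fun u _ => hTprow u), Finset.sum_add_distrib]
    have hnne : n ≠ 0 := ne_of_gt hn0
    have hmne : m ≠ 0 := ne_of_gt hm0
    have e1 : ∑ _u : V, (1 - ρ) * (1/n) = n * ((1 - ρ) * (1/n)) := by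
      rw [Finset.sum_const, Finset.card_univ, nsmul_eq_mul, hn]
    have e2 : ∑ u, (ρ/m) * ((E.filter fun e => e.1 = u).card : ℝ) = (ρ/m) * m := by
      rw [← Finset.mul_sum, hdeg]
    rw [e1, e2]
    field_simp
    ring
  -- rewrite the drift
  have hΔ1 : ∑ y, pinTrans E ρ P φ x y * (gq y - gq x)
      = ∑ y, Toff E ρ P φ x y * (gq y - gq x) := by
    refine Finset.sum_congr rfl fun y _ => ?_
    by_cases hxy : x = y
    · rw [← hxy, sub_self, mul_zero]
      try rw [mul_zero]
    · rw [pinTrans, if_neg hxy]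
  have hΔ2 := sum_reindex E ρ P φ x (fun y => gq y - gq x)
  have hgdiff : ∀ (u : V) (a : A), a ≠ x u →
      gq (Function.update x u a) - gq x
        = (1/n) * (w a - w (x u))
          + (1/n) * (1/n) * (M a a - M a (x u) - M (x u) a + M (x u) (x u)) := by
    intro u a hne
    have hconf : ∀ i, confType (Function.update x u a) i - π i
        = v i + (1/n) * ((if a = i then (1:ℝ) else 0) - (if x u = i then (1:ℝ) else 0)) := by
      intro i
      have hcu := confType_update x u a hne i
      rw [← hn] at hcu
      rw [hcu, hv, hθ]
      ring
    have hgup : gq (Function.update x u a)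
        = ∑ i, ∑ j, (v i + (1/n) * ((if a = i then (1:ℝ) else 0) - (if x u = i then (1:ℝ) else 0)))
            * M i j
            * (v j + (1/n) * ((if a = j then (1:ℝ) else 0) - (if x u = j then (1:ℝ) else 0))) := by
      rw [hgq]
      refine Finset.sum_congr rfl fun i _ => Finset.sum_congr rfl fun j _ => ?_
      rw [hconf i, hconf j]
    have hgx : gq x = ∑ i, ∑ j, v i * M i j * v j := by
      first
      | rfl
      | (rw [hgq]
         refine Finset.sum_congr rfl fun i _ => Finset.sum_congr rfl fun j _ => ?_
         rw [hv, hθ])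
    rw [hgup, hgx, quad_update M v a (x u) (1/n)]
    have hwa : w a = ∑ j, (M a j + M j a) * v j := by rw [hw]
    have hwb : w (x u) = ∑ j, (M (x u) j + M j (x u)) * v j := by rw [hw]
    rw [hwa, hwb]
    ring
  set sp : Finset (V × A) := (Finset.univ ×ˢ Finset.univ).filter (fun p => p.2 ≠ x p.1)
    with hspdef
  have hΔ3 : ∑ y, pinTrans E ρ P φ x y * (gq y - gq x)
      = (1/n) * (∑ p ∈ sp, Tp p.1 p.2 * (w p.2 - w (x p.1)))
        + ∑ p ∈ sp, Tp p.1 p.2 * ((1/n) * (1/n)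
            * (M p.2 p.2 - M p.2 (x p.1) - M (x p.1) p.2 + M (x p.1) (x p.1))) := by
    rw [hΔ1, hΔ2, Finset.mul_sum, ← Finset.sum_add_distrib]
    refine Finset.sum_congr rfl fun p hp => ?_
    have hp2 := (Finset.mem_filter.mp hp).2
    rw [hToffTp p.1 p.2 hp2, hgdiff p.1 p.2 hp2]
    ring
  have hTpsle : ∑ p ∈ sp, Tp p.1 p.2 ≤ 1 := by
    calc ∑ p ∈ sp, Tp p.1 p.2
        ≤ ∑ p ∈ (Finset.univ ×ˢ Finset.univ : Finset (V × A)), Tp p.1 p.2 :=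
          Finset.sum_le_sum_of_subset_of_nonneg (Finset.filter_subset _ _)
            (fun p _ _ => hTp0 p.1 p.2)
      _ = ∑ u, ∑ a, Tp u a := by
          exact Finset.sum_product _ _ _
      _ = 1 := hTptot
  have hMterm : ∀ (b a : A), |M a a - M a b - M b a + M b b| ≤ 4 * CM := by
    intro b a
    have h1 := hMb a a; have h2 := hMb a b; have h3 := hMb b a; have h4 := hMb b b
    rw [abs_le]
    constructor <;> linarith [h1.1, h1.2, h2.1, h2.2, h3.1, h3.2, h4.1, h4.2]
  have hErr1 : |∑ p ∈ sp, Tp p.1 p.2 * ((1/n) * (1/n)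
      * (M p.2 p.2 - M p.2 (x p.1) - M (x p.1) p.2 + M (x p.1) (x p.1)))|
      ≤ 4 * CM / (n * n) := by
    calc |∑ p ∈ sp, Tp p.1 p.2 * ((1/n) * (1/n)
        * (M p.2 p.2 - M p.2 (x p.1) - M (x p.1) p.2 + M (x p.1) (x p.1)))|
        ≤ ∑ p ∈ sp, |Tp p.1 p.2 * ((1/n) * (1/n)
          * (M p.2 p.2 - M p.2 (x p.1) - M (x p.1) p.2 + M (x p.1) (x p.1)))| :=
          Finset.abs_sum_le_sum_abs _ _
      _ ≤ ∑ p ∈ sp, Tp p.1 p.2 * (4 * CM / (n * n)) := by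
          refine Finset.sum_le_sum fun p _ => ?_
          rw [abs_mul, abs_of_nonneg (hTp0 p.1 p.2), abs_mul]
          rw [abs_of_nonneg (show (0:ℝ) ≤ (1/n) * (1/n) by positivity)]
          refine mul_le_mul_of_nonneg_left ?_ (hTp0 p.1 p.2)
          calc (1/n) * (1/n) * |M p.2 p.2 - M p.2 (x p.1) - M (x p.1) p.2 + M (x p.1) (x p.1)|
              ≤ (1/n) * (1/n) * (4 * CM) :=
                mul_le_mul_of_nonneg_left (hMterm (x p.1) p.2) (by positivity)
            _ = 4 * CM / (n * n) := by field_simp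
      _ = (∑ p ∈ sp, Tp p.1 p.2) * (4 * CM / (n * n)) := by rw [Finset.sum_mul]
      _ ≤ 1 * (4 * CM / (n * n)) :=
          mul_le_mul_of_nonneg_right hTpsle (by positivity)
      _ = 4 * CM / (n * n) := by ring
  have hMainExt : ∑ p ∈ sp, Tp p.1 p.2 * (w p.2 - w (x p.1))
      = ∑ u, ∑ a, Tp u a * (w a - w (x u)) := by
    have hprod : ∑ p ∈ (Finset.univ ×ˢ Finset.univ : Finset (V × A)),
        Tp p.1 p.2 * (w p.2 - w (x p.1)) = ∑ u, ∑ a, Tp u a * (w a - w (x u)) := by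
      exact Finset.sum_product _ _ _
    rw [← hprod]
    refine Finset.sum_subset (Finset.filter_subset _ _) fun p _ hpn => ?_
    rw [hspdef] at hpn
    simp only [Finset.mem_filter, Finset.mem_product, Finset.mem_univ, true_and,
      not_and, not_not] at hpn
    rw [hpn, sub_self, mul_zero]
  -- named quantities
  set Pw : A → ℝ := fun j => ∑ a, P j a * w a with hPwdef
  set Rw : A → ℝ := fun ℓ => ∑ a, R ℓ a * w a with hRwdef
  set ξ1 : A → ℝ := fun ℓ => ((E.filter fun e => x e.1 = ℓ).card : ℝ) / m with hξ1def
  set ξ2 : A → ℝ := fun ℓ => ((E.filter fun e => x e.2 = ℓ).card : ℝ) / m with hξ2def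
  have hnne : n ≠ 0 := ne_of_gt hn0
  have hmne : m ≠ 0 := ne_of_gt hm0
  have hθcard : ∀ j : A, ((Finset.univ.filter fun u => x u = j).card : ℝ) = n * θ j := by
    intro j
    rw [hθ]
    unfold confType
    rw [← hn]
    field_simp
  have hξ1card : ∀ ℓ : A, ((E.filter fun e => x e.1 = ℓ).card : ℝ) = m * ξ1 ℓ := by
    intro ℓ; rw [hξ1def]; field_simp
  have hξ2card : ∀ ℓ : A, ((E.filter fun e => x e.2 = ℓ).card : ℝ) = m * ξ2 ℓ := by
    intro ℓ; rw [hξ2def]; exact (mul_div_cancel₀ _ hmne).symm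
  -- evaluate the main term
  have hSA1 : ∑ u, ∑ a, P (x u) a * w a = ∑ j, (n * θ j) * Pw j := by
    calc ∑ u, ∑ a, P (x u) a * w a = ∑ u, Pw (x u) := rfl
      _ = ∑ j, ((Finset.univ.filter fun u => x u = j).card : ℝ) * Pw j :=
          fiber_sum Finset.univ x Pw
      _ = ∑ j, (n * θ j) * Pw j := by
          exact Finset.sum_congr rfl fun j _ => by rw [hθcard j]
  have hSA2 : ∑ u, ∑ a, (∑ e ∈ E.filter fun e => e.1 = u, R (x e.2) a) * w a
      = ∑ ℓ, (m * ξ2 ℓ) * Rw ℓ := by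
    have step1 : ∀ u, ∑ a, (∑ e ∈ E.filter fun e => e.1 = u, R (x e.2) a) * w a
        = ∑ e ∈ E.filter fun e => e.1 = u, Rw (x e.2) := by
      intro u
      calc ∑ a, (∑ e ∈ E.filter fun e => e.1 = u, R (x e.2) a) * w a
          = ∑ a, ∑ e ∈ E.filter fun e => e.1 = u, R (x e.2) a * w a :=
            Finset.sum_congr rfl fun a _ => Finset.sum_mul _ _ _
        _ = ∑ e ∈ E.filter fun e => e.1 = u, ∑ a, R (x e.2) a * w a := Finset.sum_comm
        _ = ∑ e ∈ E.filter fun e => e.1 = u, Rw (x e.2) := rfl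
    calc ∑ u, ∑ a, (∑ e ∈ E.filter fun e => e.1 = u, R (x e.2) a) * w a
        = ∑ u, ∑ e ∈ E.filter fun e => e.1 = u, Rw (x e.2) :=
          Finset.sum_congr rfl fun u _ => step1 u
      _ = ∑ e ∈ E, Rw (x e.2) := Finset.sum_fiberwise E (fun e => e.1) (fun e => Rw (x e.2))
      _ = ∑ ℓ, ((E.filter fun e => x e.2 = ℓ).card : ℝ) * Rw ℓ := fiber_sum E (fun e => x e.2) Rw
      _ = ∑ ℓ, (m * ξ2 ℓ) * Rw ℓ :=
          Finset.sum_congr rfl fun ℓ _ => by rw [hξ2card ℓ]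
  have hSB1 : ∑ u, w (x u) = ∑ j, (n * θ j) * w j := by
    calc ∑ u, w (x u) = ∑ j, ((Finset.univ.filter fun u => x u = j).card : ℝ) * w j :=
          fiber_sum Finset.univ x w
      _ = ∑ j, (n * θ j) * w j := Finset.sum_congr rfl fun j _ => by rw [hθcard j]
  have hSB2 : ∑ u, ((E.filter fun e => e.1 = u).card : ℝ) * w (x u)
      = ∑ ℓ, (m * ξ1 ℓ) * w ℓ := by
    calc ∑ u, ((E.filter fun e => e.1 = u).card : ℝ) * w (x u)
        = ∑ e ∈ E, w (x e.1) := (fiber_sum E (fun e => e.1) (fun u => w (x u))).symm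
      _ = ∑ ℓ, ((E.filter fun e => x e.1 = ℓ).card : ℝ) * w ℓ := fiber_sum E (fun e => x e.1) w
      _ = ∑ ℓ, (m * ξ1 ℓ) * w ℓ := Finset.sum_congr rfl fun ℓ _ => by rw [hξ1card ℓ]
  have hMainEval : ∑ u, ∑ a, Tp u a * (w a - w (x u))
      = (1 - ρ) * ((∑ j, θ j * Pw j) - (∑ j, θ j * w j))
        + ρ * ((∑ ℓ, ξ2 ℓ * Rw ℓ) - (∑ ℓ, ξ1 ℓ * w ℓ)) := by
    have hsplit2 : ∑ u, ∑ a, Tp u a * (w a - w (x u))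
        = (∑ u, ∑ a, Tp u a * w a) - (∑ u, ∑ a, Tp u a * w (x u)) := by
      rw [← Finset.sum_sub_distrib]
      refine Finset.sum_congr rfl fun u _ => ?_
      rw [← Finset.sum_sub_distrib]
      exact Finset.sum_congr rfl fun a _ => by ring
    have hPA : ∑ u, ∑ a, Tp u a * w a
        = (1 - ρ) * (1/n) * (∑ u, ∑ a, P (x u) a * w a)
          + (ρ/m) * (∑ u, ∑ a, (∑ e ∈ E.filter fun e => e.1 = u, R (x e.2) a) * w a) := by
      rw [Finset.mul_sum, Finset.mul_sum, ← Finset.sum_add_distrib]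
      refine Finset.sum_congr rfl fun u _ => ?_
      rw [Finset.mul_sum, Finset.mul_sum, ← Finset.sum_add_distrib]
      refine Finset.sum_congr rfl fun a _ => ?_
      simp only [hTpdef]
      ring
    have hPB : ∑ u, ∑ a, Tp u a * w (x u)
        = (1 - ρ) * (1/n) * (∑ u, w (x u))
          + (ρ/m) * (∑ u, ((E.filter fun e => e.1 = u).card : ℝ) * w (x u)) := by
      rw [Finset.mul_sum, Finset.mul_sum, ← Finset.sum_add_distrib]
      refine Finset.sum_congr rfl fun u _ => ?_
      rw [← Finset.sum_mul, hTprow u]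
      ring
    rw [hsplit2, hPA, hPB, hSA1, hSA2, hSB1, hSB2]
    have c1 : (1 - ρ) * (1/n) * (∑ j, (n * θ j) * Pw j) = (1 - ρ) * ∑ j, θ j * Pw j := by
      rw [Finset.mul_sum, Finset.mul_sum]
      refine Finset.sum_congr rfl fun j _ => ?_
      field_simp
    have c2 : (ρ/m) * (∑ ℓ, (m * ξ2 ℓ) * Rw ℓ) = ρ * ∑ ℓ, ξ2 ℓ * Rw ℓ := by
      rw [Finset.mul_sum, Finset.mul_sum]
      refine Finset.sum_congr rfl fun ℓ _ => ?_
      field_simp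
    have c3 : (1 - ρ) * (1/n) * (∑ j, (n * θ j) * w j) = (1 - ρ) * ∑ j, θ j * w j := by
      rw [Finset.mul_sum, Finset.mul_sum]
      refine Finset.sum_congr rfl fun j _ => ?_
      field_simp
    have c4 : (ρ/m) * (∑ ℓ, (m * ξ1 ℓ) * w ℓ) = ρ * ∑ ℓ, ξ1 ℓ * w ℓ := by
      rw [Finset.mul_sum, Finset.mul_sum]
      refine Finset.sum_congr rfl fun ℓ _ => ?_
      field_simp
    rw [c1, c2, c3, c4]
    ring
  -- ξ vs θ estimates
  have hξ1b : ∀ ℓ, |ξ1 ℓ - θ ℓ| ≤ 5 * W := by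
    intro ℓ
    have h := hmarg (Finset.univ.filter fun u => x u = ℓ) true
    simp only [if_true] at h
    have hconv : (E.filter fun e => e.1 ∈ Finset.univ.filter fun u => x u = ℓ)
        = E.filter fun e => x e.1 = ℓ := by
      apply Finset.filter_congr
      intro e _
      simp
    rw [hconv] at h
    exact h
  have hξ2b : ∀ ℓ, |ξ2 ℓ - θ ℓ| ≤ 5 * W := by
    intro ℓ
    have h := hmarg (Finset.univ.filter fun u => x u = ℓ) false
    simp only [Bool.false_eq_true, if_false] at h
    have hconv : (E.filter fun e => e.2 ∈ Finset.univ.filter fun u => x u = ℓ)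
        = E.filter fun e => x e.2 = ℓ := by
      apply Finset.filter_congr
      intro e _
      simp
    rw [hconv] at h
    exact h
  -- Lyapunov comparison
  have hLyap : ∑ i, w i * ((∑ j, S j i * v j) - v i) ≤ -(3/2) * ∑ i, v i ^ 2 :=
    hlyap v hvsum
  have hLyapEq : ∑ i, w i * ((∑ j, S j i * θ j) - θ i)
      = ∑ i, w i * ((∑ j, S j i * v j) - v i) := by
    refine Finset.sum_congr rfl fun i _ => ?_
    have h1 : ∑ j, S j i * v j = (∑ j, S j i * θ j) - π i := by
      have hterm : ∀ j, S j i * v j = S j i * θ j - S j i * π j := fun j => by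
        rw [hv]; ring
      rw [Finset.sum_congr rfl (fun j _ => hterm j), Finset.sum_sub_distrib, hπinv i]
    rw [h1, hv]
    ring
  have hT : ∑ i, w i * (∑ j, S j i * θ j)
      = ∑ j, θ j * ((1 - ρ) * Pw j + ρ * Rw j) := by
    calc ∑ i, w i * (∑ j, S j i * θ j)
        = ∑ i, ∑ j, w i * (S j i * θ j) :=
          Finset.sum_congr rfl fun i _ => Finset.mul_sum _ _ _
      _ = ∑ j, ∑ i, w i * (S j i * θ j) := Finset.sum_comm
      _ = ∑ j, θ j * ((1 - ρ) * Pw j + ρ * Rw j) := by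
          refine Finset.sum_congr rfl fun j _ => ?_
          calc ∑ i, w i * (S j i * θ j)
              = ∑ i, (θ j * ((1 - ρ) * (P j i * w i)) + θ j * (ρ * (R j i * w i))) :=
                Finset.sum_congr rfl fun i _ => by rw [hS j i]; ring
            _ = θ j * ((1 - ρ) * ∑ i, P j i * w i) + θ j * (ρ * ∑ i, R j i * w i) := by
                rw [Finset.sum_add_distrib]
                congr 1 <;> simp only [Finset.mul_sum]
            _ = θ j * ((1 - ρ) * Pw j + ρ * Rw j) := by
                rw [hPwdef, hRwdef]
                ring
  have hLy2 : ∑ i, w i * ((∑ j, S j i * θ j) - θ i)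
      = (1 - ρ) * ((∑ j, θ j * Pw j) - (∑ j, θ j * w j))
        + ρ * ((∑ ℓ, θ ℓ * Rw ℓ) - (∑ ℓ, θ ℓ * w ℓ)) := by
    have hmulsub : ∑ i, w i * ((∑ j, S j i * θ j) - θ i)
        = (∑ i, w i * (∑ j, S j i * θ j)) - ∑ i, w i * θ i := by
      rw [← Finset.sum_sub_distrib]
      exact Finset.sum_congr rfl fun i _ => by ring
    rw [hmulsub, hT]
    have e1 : ∑ j, θ j * ((1 - ρ) * Pw j + ρ * Rw j)
        = (1 - ρ) * (∑ j, θ j * Pw j) + ρ * ∑ j, θ j * Rw j := by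
      rw [Finset.mul_sum, Finset.mul_sum, ← Finset.sum_add_distrib]
      exact Finset.sum_congr rfl fun j _ => by ring
    have e2 : ∑ i, w i * θ i = ∑ i, θ i * w i :=
      Finset.sum_congr rfl fun i _ => mul_comm _ _
    rw [e1, e2]
    ring
  -- error from replacing ξ by θ
  have hMainLyap : (∑ u, ∑ a, Tp u a * (w a - w (x u)))
      - (∑ i, w i * ((∑ j, S j i * θ j) - θ i))
      = ρ * ((∑ ℓ, (ξ2 ℓ - θ ℓ) * Rw ℓ) - (∑ ℓ, (ξ1 ℓ - θ ℓ) * w ℓ)) := by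
    rw [hMainEval, hLy2]
    have e1 : ∑ ℓ, (ξ2 ℓ - θ ℓ) * Rw ℓ = (∑ ℓ, ξ2 ℓ * Rw ℓ) - ∑ ℓ, θ ℓ * Rw ℓ := by
      rw [← Finset.sum_sub_distrib]
      exact Finset.sum_congr rfl fun ℓ _ => by ring
    have e2 : ∑ ℓ, (ξ1 ℓ - θ ℓ) * w ℓ = (∑ ℓ, ξ1 ℓ * w ℓ) - ∑ ℓ, θ ℓ * w ℓ := by
      rw [← Finset.sum_sub_distrib]
      exact Finset.sum_congr rfl fun ℓ _ => by ring
    rw [e1, e2]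
    ring
  have hRwb : ∀ ℓ, |Rw ℓ| ≤ 4 * CM := by
    intro ℓ
    calc |Rw ℓ| ≤ ∑ a, |R ℓ a * w a| := Finset.abs_sum_le_sum_abs _ _
      _ ≤ ∑ a, R ℓ a * (4 * CM) := by
          refine Finset.sum_le_sum fun a _ => ?_
          rw [abs_mul, abs_of_nonneg (hR0 ℓ a)]
          exact mul_le_mul_of_nonneg_left (hwabs a) (hR0 ℓ a)
      _ = (4 * CM) := by
          rw [← Finset.sum_mul, hRrow ℓ, one_mul]
  have hErr2 : |ρ * ((∑ ℓ, (ξ2 ℓ - θ ℓ) * Rw ℓ) - (∑ ℓ, (ξ1 ℓ - θ ℓ) * w ℓ))|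
      ≤ 40 * CM * (Fintype.card A : ℝ) * W := by
    have hb1 : |∑ ℓ, (ξ2 ℓ - θ ℓ) * Rw ℓ| ≤ (Fintype.card A : ℝ) * (20 * CM * W) := by
      calc |∑ ℓ, (ξ2 ℓ - θ ℓ) * Rw ℓ| ≤ ∑ ℓ, |(ξ2 ℓ - θ ℓ) * Rw ℓ| :=
            Finset.abs_sum_le_sum_abs _ _
        _ ≤ ∑ _ℓ : A, 20 * CM * W := by
            refine Finset.sum_le_sum fun ℓ _ => ?_
            rw [abs_mul]
            calc |ξ2 ℓ - θ ℓ| * |Rw ℓ| ≤ (5 * W) * (4 * CM) := by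
                  exact mul_le_mul (hξ2b ℓ) (hRwb ℓ) (abs_nonneg _) (by positivity)
              _ = 20 * CM * W := by ring
        _ = (Fintype.card A : ℝ) * (20 * CM * W) := by
            rw [Finset.sum_const, Finset.card_univ, nsmul_eq_mul]
    have hb2 : |∑ ℓ, (ξ1 ℓ - θ ℓ) * w ℓ| ≤ (Fintype.card A : ℝ) * (20 * CM * W) := by
      calc |∑ ℓ, (ξ1 ℓ - θ ℓ) * w ℓ| ≤ ∑ ℓ, |(ξ1 ℓ - θ ℓ) * w ℓ| :=
            Finset.abs_sum_le_sum_abs _ _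
        _ ≤ ∑ _ℓ : A, 20 * CM * W := by
            refine Finset.sum_le_sum fun ℓ _ => ?_
            rw [abs_mul]
            calc |ξ1 ℓ - θ ℓ| * |w ℓ| ≤ (5 * W) * (4 * CM) := by
                  exact mul_le_mul (hξ1b ℓ) (hwabs ℓ) (abs_nonneg _) (by positivity)
              _ = 20 * CM * W := by ring
        _ = (Fintype.card A : ℝ) * (20 * CM * W) := by
            rw [Finset.sum_const, Finset.card_univ, nsmul_eq_mul]
    calc |ρ * ((∑ ℓ, (ξ2 ℓ - θ ℓ) * Rw ℓ) - (∑ ℓ, (ξ1 ℓ - θ ℓ) * w ℓ))|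
        = |ρ| * |(∑ ℓ, (ξ2 ℓ - θ ℓ) * Rw ℓ) - (∑ ℓ, (ξ1 ℓ - θ ℓ) * w ℓ)| := abs_mul _ _
      _ ≤ 1 * (|∑ ℓ, (ξ2 ℓ - θ ℓ) * Rw ℓ| + |∑ ℓ, (ξ1 ℓ - θ ℓ) * w ℓ|) := by
          refine mul_le_mul ?_ (abs_sub _ _) (abs_nonneg _) (by norm_num)
          rw [abs_of_nonneg hρ0]
          exact hρ1
      _ ≤ 1 * ((Fintype.card A : ℝ) * (20 * CM * W) + (Fintype.card A : ℝ) * (20 * CM * W)) := by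
          refine mul_le_mul_of_nonneg_left (add_le_add hb1 hb2) (by norm_num)
      _ = 40 * CM * (Fintype.card A : ℝ) * W := by ring
  -- final assembly
  show (3/2) * ∑ i, v i ^ 2
      ≤ - (n * ∑ y, pinTrans E ρ P φ x y * (gq y - gq x))
        + 40 * CM * (Fintype.card A : ℝ) * W + 4 * CM / n
  set Δ : ℝ := ∑ y, pinTrans E ρ P φ x y * (gq y - gq x) with hΔdef
  set MainF : ℝ := ∑ u, ∑ a, Tp u a * (w a - w (x u)) with hMainF
  set Err1 : ℝ := ∑ p ∈ sp, Tp p.1 p.2 * ((1/n) * (1/n)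
      * (M p.2 p.2 - M p.2 (x p.1) - M (x p.1) p.2 + M (x p.1) (x p.1))) with hErr1def
  have hnΔ : n * Δ = MainF + n * Err1 := by
    rw [hΔ3, hMainExt]
    field_simp
  have hstep1 : (3/2) * ∑ i, v i ^ 2 ≤ - ∑ i, w i * ((∑ j, S j i * θ j) - θ i) := by
    rw [hLyapEq]
    linarith [hLyap]
  have hstep2 : - ∑ i, w i * ((∑ j, S j i * θ j) - θ i)
      ≤ - MainF + 40 * CM * (Fintype.card A : ℝ) * W := by
    have h := hMainLyap
    have habs := hErr2
    have h2 : MainF - ∑ i, w i * ((∑ j, S j i * θ j) - θ i)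
        ≤ 40 * CM * (Fintype.card A : ℝ) * W := by
      rw [hMainF, h]
      exact le_trans (le_abs_self _) habs
    linarith
  have hstep3 : - MainF ≤ - (n * Δ) + 4 * CM / n := by
    have h1 : - MainF = - (n * Δ) + n * Err1 := by rw [hnΔ]; ring
    have h2 : n * Err1 ≤ n * (4 * CM / (n * n)) := by
      refine mul_le_mul_of_nonneg_left ?_ (le_of_lt hn0)
      exact le_trans (le_abs_self _) hErr1
    have h3 : n * (4 * CM / (n * n)) = 4 * CM / n := by field_simp
    linarith
  linarith

end PinAuxD


section MassOfHelpers

lemma massOf_pair {X : Type*} [Fintype X] (μ : X → ℝ) (p : X → Prop)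
    (hsum : ∑ x, μ x = 1) : massOf μ p + massOf μ (fun x => ¬ p x) = 1 := by
  rw [massOf, massOf, ← Finset.sum_add_distrib, ← hsum]
  refine Finset.sum_congr rfl fun x _ => ?_
  by_cases hx : p x
  · rw [if_pos hx, if_neg (not_not_intro hx), add_zero]
  · rw [if_neg hx, if_pos hx, zero_add]

lemma massOf_nonneg' {X : Type*} [Fintype X] (μ : X → ℝ) (hμ0 : ∀ x, 0 ≤ μ x)
    (p : X → Prop) : 0 ≤ massOf μ p :=
  Finset.sum_nonneg fun x _ => by
    by_cases hx : p x
    · rw [if_pos hx]; exact hμ0 x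
    · rw [if_neg hx]

lemma massOf_le_sum {X : Type*} [Fintype X] (μ f : X → ℝ) (p : X → Prop)
    (hb : ∀ x, p x → μ x ≤ f x) (hf : ∀ x, 0 ≤ f x) :
    massOf μ p ≤ ∑ x, f x :=
  Finset.sum_le_sum fun x _ => by
    by_cases hx : p x
    · rw [if_pos hx]; exact hb x hx
    · rw [if_neg hx]; exact hf x

end MassOfHelpers

/-- Proposition: concentration for forgetful PIN models on ATM networks.
For a forgetful PIN model (`φ_{ij}(ℓ) = R_{ℓj}`) on an ATM graph sequence, if
`S = (1−ρ)P + ρR` is irreducible with invariant probability vector `π`, then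
`μ_n({x : ‖θ(x) − π‖₂ < δ}) → 1` as `n → ∞`, for every `δ > 0`. -/
theorem concentration_forgetful {A : Type*} [Fintype A] [DecidableEq A] [Nonempty A]
    (ρ : ℝ) (P : A → A → ℝ) (φ : A → A → A → ℝ) (R : A → A → ℝ)
    (hR : ∀ i j, 0 ≤ R i j) (hRrow : ∀ i, ∑ j, R i j = 1)
    (hforget : ∀ i j ℓ, φ i j ℓ = R ℓ j)
    (E : (n : ℕ) → Finset (Fin n × Fin n))
    (hmodel : ∀ n, 2 ≤ n → IsPinModel (E n) ρ P φ)
    (hATM : Tendsto (fun n => mixingGap (E n)) atTop (nhds 0))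
    (S : Matrix A A ℝ) (hS : S = Matrix.of fun i j => (1 - ρ) * P i j + ρ * R i j)
    (hirr : ∀ i j : A, ∃ k : ℕ, 1 ≤ k ∧ 0 < (S ^ k) i j)
    (π : A → ℝ) (hπ : inSimplex π) (hπinv : ∀ i, ∑ j, S j i * π j = π i)
    (μ : (n : ℕ) → (Fin n → A) → ℝ)
    (hμ : ∀ n, 2 ≤ n → IsStationaryPin (E n) ρ P φ (μ n)) :
    ∀ δ > (0 : ℝ),
      Tendsto (fun n => massOf (μ n) (fun x : Fin n → A =>
          Real.sqrt (∑ i, (confType x i - π i) ^ 2) < δ))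
        atTop (nhds 1) := by

  classical
  intro δ hδ
  obtain ⟨hρ0, hρ1, hP0, hProw, hφ0, hφrow, hE2, hloop2⟩ := hmodel 2 (le_refl 2)
  have hSfun : ∀ i j, S i j = (1 - ρ) * P i j + ρ * R i j := by
    intro i j; rw [hS]; rfl
  have hSnn : ∀ i j, 0 ≤ S i j := by
    intro i j
    rw [hSfun]
    have h1 := hP0 i j
    have h2 := hR i j
    nlinarith
  have hSrow : ∀ i, ∑ j, S i j = 1 := by
    intro i
    calc ∑ j, S i j = ∑ j, ((1 - ρ) * P i j + ρ * R i j) :=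
          Finset.sum_congr rfl fun j _ => hSfun i j
      _ = (1 - ρ) * (∑ j, P i j) + ρ * ∑ j, R i j := by
          rw [Finset.sum_add_distrib, Finset.mul_sum, Finset.mul_sum]
      _ = 1 := by rw [hProw i, hRrow i]; ring
  obtain ⟨M, CM, hCM, hMb, hlyap⟩ := PinAux.exists_lyap S hSnn hSrow hirr
  set Na : ℝ := (Fintype.card A : ℝ) with hNa
  set m2 : ℕ → ℝ := fun n => ∑ x : Fin n → A, μ n x * ∑ i, (confType x i - π i) ^ 2 with hm2
  set bnd : ℕ → ℝ := fun n => (2/3) * (40 * CM * Na * mixingGap (E n) + 4 * CM / (n:ℝ)) with hbnd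
  have hm2nn : ∀ n, 2 ≤ n → 0 ≤ m2 n := fun n hn =>
    Finset.sum_nonneg fun x _ => mul_nonneg ((hμ n hn).1 x)
      (Finset.sum_nonneg fun i _ => sq_nonneg _)
  have hkey : ∀ n, 2 ≤ n → m2 n ≤ bnd n := by
    intro n hn
    obtain ⟨_, _, _, _, _, _, hEne, hloopn⟩ := hmodel n hn
    have hstat := hμ n hn
    have hcardV : Fintype.card (Fin n) = n := Fintype.card_fin n
    have hV2 : 2 ≤ Fintype.card (Fin n) := by rw [hcardV]; exact hn
    set g : (Fin n → A) → ℝ :=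
      fun y => ∑ i, ∑ j, (confType y i - π i) * M i j * (confType y j - π j) with hg
    have hgzero := PinAuxD.stat_exp (E n) ρ P φ (μ n) hstat g
    have hW0 : 0 ≤ mixingGap (E n) := PinAuxG.gap_nonneg (E n)
    have hmarg := fun (T : Finset (Fin n)) (side : Bool) =>
      PinAuxG.marg_est (E n) hloopn hV2 T side
    have hdb : ∀ x : Fin n → A,
        (3/2) * ∑ i, (confType x i - π i) ^ 2
          ≤ - ((Fintype.card (Fin n) : ℝ) * ∑ y, pinTrans (E n) ρ P φ x y * (g y - g x))
            + 40 * CM * Na * mixingGap (E n) + 4 * CM / (Fintype.card (Fin n) : ℝ) := by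
      intro x
      exact PinAuxD.drift_bound (E n) ρ P φ R hρ0 hρ1 hP0 hProw hR hRrow hforget hEne hloopn
        hV2 M CM hCM hMb S hSfun π hπ.1 hπ.2 hπinv hlyap (mixingGap (E n)) hW0 hmarg x
    have hmul : ∀ x : Fin n → A, μ n x * ((3/2) * ∑ i, (confType x i - π i) ^ 2)
        ≤ μ n x * (- ((n:ℝ) * ∑ y, pinTrans (E n) ρ P φ x y * (g y - g x))
            + 40 * CM * Na * mixingGap (E n) + 4 * CM / (n:ℝ)) := by
      intro x
      have hx := hdb x
      rw [hcardV] at hx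
      exact mul_le_mul_of_nonneg_left hx (hstat.1 x)
    have hsum := Finset.sum_le_sum (fun x (_ : x ∈ Finset.univ) => hmul x)
    have hL : ∑ x : Fin n → A, μ n x * ((3/2) * ∑ i, (confType x i - π i) ^ 2)
        = (3/2) * m2 n := by
      rw [hm2, Finset.mul_sum]
      exact Finset.sum_congr rfl fun x _ => by ring
    have hR1 : ∑ x : Fin n → A, μ n x * (- ((n:ℝ) * ∑ y, pinTrans (E n) ρ P φ x y * (g y - g x))
          + 40 * CM * Na * mixingGap (E n) + 4 * CM / (n:ℝ))
        = - (n:ℝ) * (∑ x : Fin n → A, μ n x * (∑ y, pinTrans (E n) ρ P φ x y * (g y - g x)))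
          + (40 * CM * Na * mixingGap (E n) + 4 * CM / (n:ℝ)) * ∑ x : Fin n → A, μ n x := by
      calc ∑ x : Fin n → A, μ n x * (- ((n:ℝ) * ∑ y, pinTrans (E n) ρ P φ x y * (g y - g x))
            + 40 * CM * Na * mixingGap (E n) + 4 * CM / (n:ℝ))
          = ∑ x : Fin n → A, (- (n:ℝ) * (μ n x * (∑ y, pinTrans (E n) ρ P φ x y * (g y - g x)))
              + (40 * CM * Na * mixingGap (E n) + 4 * CM / (n:ℝ)) * μ n x) :=
            Finset.sum_congr rfl fun x _ => by ring
        _ = _ := by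
            rw [Finset.sum_add_distrib, ← Finset.mul_sum, ← Finset.mul_sum]
    rw [hL, hR1, hgzero, hstat.2.1] at hsum
    rw [hbnd]
    linarith
  -- the bound sequence tends to zero
  have hbnd0 : Filter.Tendsto bnd Filter.atTop (nhds 0) := by
    have h1 : Filter.Tendsto (fun n => 40 * CM * Na * mixingGap (E n))
        Filter.atTop (nhds 0) := by
      have := hATM.const_mul (40 * CM * Na)
      simpa using this
    have h2 : Filter.Tendsto (fun n : ℕ => 4 * CM / (n:ℝ)) Filter.atTop (nhds 0) :=
      tendsto_const_div_atTop_nhds_zero_nat (4 * CM)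
    have h3 := (h1.add h2).const_mul (2/3 : ℝ)
    simpa [hbnd] using h3
  -- squeeze
  have hδ2 : (0:ℝ) < δ ^ 2 := by positivity
  set lo : ℕ → ℝ := fun n => 1 - bnd n / δ ^ 2 with hlo
  have hlo1 : Filter.Tendsto lo Filter.atTop (nhds 1) := by
    have := (hbnd0.div_const (δ ^ 2)).const_sub 1
    simpa [hlo] using this
  have hev : ∀ n, 2 ≤ n →
      lo n ≤ massOf (μ n) (fun x : Fin n → A =>
        Real.sqrt (∑ i, (confType x i - π i) ^ 2) < δ)
      ∧ massOf (μ n) (fun x : Fin n → A =>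
        Real.sqrt (∑ i, (confType x i - π i) ^ 2) < δ) ≤ 1 := by
    intro n hn
    have hstat := hμ n hn
    set p : (Fin n → A) → Prop :=
      fun x => Real.sqrt (∑ i, (confType x i - π i) ^ 2) < δ with hp
    have hsplitm : massOf (μ n) p + massOf (μ n) (fun x => ¬ p x) = 1 :=
      massOf_pair (μ n) p hstat.2.1
    have hmc_nonneg : 0 ≤ massOf (μ n) (fun x => ¬ p x) :=
      massOf_nonneg' (μ n) hstat.1 _
    have hmc_le : massOf (μ n) (fun x => ¬ p x) ≤ m2 n / δ ^ 2 := by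
      have hmain := massOf_le_sum (μ n)
        (fun x => (μ n x * ∑ i, (confType x i - π i) ^ 2) / δ ^ 2) (fun x => ¬ p x)
        (by
          intro x hx
          have h1 : δ ≤ Real.sqrt (∑ i, (confType x i - π i) ^ 2) := le_of_not_gt hx
          have hs0 : (0:ℝ) ≤ ∑ i, (confType x i - π i) ^ 2 :=
            Finset.sum_nonneg fun i _ => sq_nonneg _
          have hsq : δ ^ 2 ≤ ∑ i, (confType x i - π i) ^ 2 := by
            have h2 := pow_le_pow_left₀ hδ.le h1 2
            rwa [Real.sq_sqrt hs0] at h2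
          rw [le_div_iff₀ hδ2]
          exact mul_le_mul_of_nonneg_left hsq (hstat.1 x))
        (by
          intro x
          have hs0 : (0:ℝ) ≤ ∑ i, (confType x i - π i) ^ 2 :=
            Finset.sum_nonneg fun i _ => sq_nonneg _
          have := hstat.1 x
          positivity)
      refine le_trans hmain (le_of_eq ?_)
      rw [hm2, Finset.sum_div]
    have hbc : massOf (μ n) (fun x => ¬ p x) ≤ bnd n / δ ^ 2 :=
      le_trans hmc_le ((div_le_div_iff_of_pos_right hδ2).mpr (hkey n hn))
    constructor
    · have h1 : massOf (μ n) p = 1 - massOf (μ n) (fun x => ¬ p x) := by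
        linarith [hsplitm]
      rw [h1]
      show 1 - bnd n / δ ^ 2 ≤ 1 - massOf (μ n) (fun x => ¬ p x)
      linarith [hbc]
    · have h1 : massOf (μ n) p = 1 - massOf (μ n) (fun x => ¬ p x) := by
        linarith [hsplitm]
      rw [h1]
      linarith [hmc_nonneg]
  refine tendsto_of_tendsto_of_tendsto_of_le_of_le' hlo1 tendsto_const_nhds ?_ ?_
  · exact Filter.eventually_atTop.mpr ⟨2, fun n hn => (hev n hn).1⟩
  · exact Filter.eventually_atTop.mpr ⟨2, fun n hn => (hev n hn).2⟩

end
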